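/- arXiv:1509.07764 — 8 statements merged into one kernel-verified Lean document; each statement's English description precedes it below -/
import Mathlib

section
/- Let μ₁, μ₂ ∈ ℂ and set τ = μ₁² − μ₂². Consider 3×3 complex matrices depending on parameters x, a, b, c, y, z ∈ ℂ: S with rows (0, x, 0), (1, 0, 0), (0, 1, μ₁+μ₂), and Y with rows (a, b, 0), (c, −a, 0), (y, z, (μ₁−μ₂)/2). Then S·Y + Y·S = τ·I and (Y − S/2)² = μ₂²·I hold if and only if b = τ − c·x, c = −(μ₁+μ₂)·y − z, a = (μ₁+μ₂)·z + y·x + (μ₁−μ₂)/2, and y²·x − z² + 1/4 + (μ₁−μ₂)·y = 0. In particular, the map (S,Y) ↦ (y, z, x) is a bijection from the set of such solutions onto the surface {(y,z,x) ∈ ℂ³ : y²·x − z² + 1/4 + (μ₁−μ₂)·y = 0}. -/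
open Matrix

private lemma key_slice (μ₁ μ₂ x a b c y z : ℂ) :
      ((!![0, x, 0; 1, 0, 0; 0, 1, μ₁ + μ₂] : Matrix (Fin 3) (Fin 3) ℂ)
            * !![a, b, 0; c, -a, 0; y, z, (μ₁ - μ₂)/2]
          + !![a, b, 0; c, -a, 0; y, z, (μ₁ - μ₂)/2] * !![0, x, 0; 1, 0, 0; 0, 1, μ₁ + μ₂]
          = (μ₁^2 - μ₂^2) • (1 : Matrix (Fin 3) (Fin 3) ℂ) ∧
        ((!![a, b, 0; c, -a, 0; y, z, (μ₁ - μ₂)/2] : Matrix (Fin 3) (Fin 3) ℂ)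
            - (1/2 : ℂ) • !![0, x, 0; 1, 0, 0; 0, 1, μ₁ + μ₂]) ^ 2
          = μ₂^2 • (1 : Matrix (Fin 3) (Fin 3) ℂ))
      ↔ (b = (μ₁^2 - μ₂^2) - c * x ∧
          c = -(μ₁ + μ₂) * y - z ∧
          a = (μ₁ + μ₂) * z + y * x + (μ₁ - μ₂)/2 ∧
          y^2 * x - z^2 + 1/4 + (μ₁ - μ₂) * y = 0) := by
  constructor
  · rintro ⟨h1, h2⟩
    rw [pow_two] at h2
    have e1 := congrFun (congrFun h1 0) 0
    have e2 := congrFun (congrFun h1 2) 0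
    have e3 := congrFun (congrFun h1 2) 1
    have e4 := congrFun (congrFun h2 2) 0
    simp [Matrix.mul_apply, Fin.sum_univ_succ, Matrix.one_apply] at e1 e2 e3 e4
    refine ⟨by linear_combination e1, by linear_combination e2, by linear_combination -e3, ?_⟩
    linear_combination e4 + y * e3 + (1/2 - z) * e2
  · rintro ⟨hb, hc, ha, hF⟩
    subst hb hc ha
    constructor
    · ext i j
      fin_cases i <;> fin_cases j <;>
        simp [Matrix.mul_apply, Fin.sum_univ_succ, Matrix.one_apply] <;> ring
    · rw [pow_two]
      ext i j
      fin_cases i <;> fin_cases j <;>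
        simp [Matrix.mul_apply, Fin.sum_univ_succ, Matrix.one_apply] <;>
        first
          | ring1
          | linear_combination hF
          | linear_combination (μ₁ + μ₂) * hF
          | linear_combination (x - (μ₁ + μ₂)^2) * hF

/-- For 3×3 matrices `S = !![0,x,0; 1,0,0; 0,1,μ₁+μ₂]` and
`Y = !![a,b,0; c,-a,0; y,z,(μ₁-μ₂)/2]`, the equations `S·Y + Y·S = (μ₁²-μ₂²)·I` and
`(Y - S/2)² = μ₂²·I` hold iff `b = τ - c·x`, `c = -(μ₁+μ₂)·y - z`,
`a = (μ₁+μ₂)·z + y·x + (μ₁-μ₂)/2` and `y²·x - z² + 1/4 + (μ₁-μ₂)·y = 0`; moreover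
`(S,Y) ↦ (y,z,x)` is a bijection from the solution set onto the `D₁`-surface. -/
theorem slice_GL3_is_D1_surface (μ₁ μ₂ : ℂ) :
    (∀ x a b c y z : ℂ,
      ((!![0, x, 0; 1, 0, 0; 0, 1, μ₁ + μ₂] : Matrix (Fin 3) (Fin 3) ℂ)
            * !![a, b, 0; c, -a, 0; y, z, (μ₁ - μ₂)/2]
          + !![a, b, 0; c, -a, 0; y, z, (μ₁ - μ₂)/2] * !![0, x, 0; 1, 0, 0; 0, 1, μ₁ + μ₂]
          = (μ₁^2 - μ₂^2) • (1 : Matrix (Fin 3) (Fin 3) ℂ) ∧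
        ((!![a, b, 0; c, -a, 0; y, z, (μ₁ - μ₂)/2] : Matrix (Fin 3) (Fin 3) ℂ)
            - (1/2 : ℂ) • !![0, x, 0; 1, 0, 0; 0, 1, μ₁ + μ₂]) ^ 2
          = μ₂^2 • (1 : Matrix (Fin 3) (Fin 3) ℂ))
      ↔ (b = (μ₁^2 - μ₂^2) - c * x ∧
          c = -(μ₁ + μ₂) * y - z ∧
          a = (μ₁ + μ₂) * z + y * x + (μ₁ - μ₂)/2 ∧
          y^2 * x - z^2 + 1/4 + (μ₁ - μ₂) * y = 0)) ∧
    Set.BijOn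
      (fun P : Matrix (Fin 3) (Fin 3) ℂ × Matrix (Fin 3) (Fin 3) ℂ =>
        (P.2 2 0, P.2 2 1, P.1 0 1))
      {P : Matrix (Fin 3) (Fin 3) ℂ × Matrix (Fin 3) (Fin 3) ℂ |
        (∃ x a b c y z : ℂ, P.1 = !![0, x, 0; 1, 0, 0; 0, 1, μ₁ + μ₂] ∧
          P.2 = !![a, b, 0; c, -a, 0; y, z, (μ₁ - μ₂)/2]) ∧
        P.1 * P.2 + P.2 * P.1 = (μ₁^2 - μ₂^2) • 1 ∧
        (P.2 - (1/2 : ℂ) • P.1) ^ 2 = μ₂^2 • 1}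
      {p : ℂ × ℂ × ℂ |
        p.1^2 * p.2.2 - p.2.1^2 + 1/4 + (μ₁ - μ₂) * p.1 = 0} := by
  refine ⟨fun x a b c y z => key_slice μ₁ μ₂ x a b c y z, ?_, ?_, ?_⟩
  · -- MapsTo
    rintro ⟨S, Y⟩ ⟨⟨x, a, b, c, y, z, hS, hY⟩, hm1, hm2⟩
    subst hS hY
    have h := (key_slice μ₁ μ₂ x a b c y z).1 ⟨hm1, hm2⟩
    simpa using h.2.2.2
  · -- InjOn
    rintro ⟨S, Y⟩ ⟨⟨x, a, b, c, y, z, hS, hY⟩, hm1, hm2⟩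
      ⟨S', Y'⟩ ⟨⟨x', a', b', c', y', z', hS', hY'⟩, hm1', hm2'⟩ him
    subst hS hY hS' hY'
    obtain ⟨hb, hc, ha, -⟩ := (key_slice μ₁ μ₂ x a b c y z).1 ⟨hm1, hm2⟩
    obtain ⟨hb', hc', ha', -⟩ := (key_slice μ₁ μ₂ x' a' b' c' y' z').1 ⟨hm1', hm2'⟩
    simp only [Prod.mk.injEq] at him
    obtain ⟨hy, hz, hx⟩ := him
    have hy' : y = y' := by simpa using hy
    have hz' : z = z' := by simpa using hz
    have hx' : x = x' := by simpa using hx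
    subst hy' hz' hx'
    have hcc : c = c' := by rw [hc, hc']
    have haa : a = a' := by rw [ha, ha']
    have hbb : b = b' := by rw [hb, hb', hcc]
    subst hcc haa hbb
    rfl
  · -- SurjOn
    rintro ⟨y, z, x⟩ hp
    simp only [Set.mem_setOf_eq] at hp
    refine ⟨(!![0, x, 0; 1, 0, 0; 0, 1, μ₁ + μ₂],
      !![(μ₁ + μ₂) * z + y * x + (μ₁ - μ₂)/2,
         (μ₁^2 - μ₂^2) - (-(μ₁ + μ₂) * y - z) * x, 0;
         -(μ₁ + μ₂) * y - z, -((μ₁ + μ₂) * z + y * x + (μ₁ - μ₂)/2), 0;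
         y, z, (μ₁ - μ₂)/2]), ⟨⟨x, _, _, _, y, z, rfl, rfl⟩, ?_⟩, ?_⟩
    · exact (key_slice μ₁ μ₂ x _ _ _ y z).2 ⟨rfl, rfl, rfl, hp⟩
    · simp
end

section
/- Let μ₁, μ₂ ∈ ℂ and set τ = μ₁² − μ₂². Consider 2×2 complex matrices S = [[0, x],[1, 0]] and Y = [[a, b],[c, −a]] with x, a, b, c ∈ ℂ. Then S·Y + Y·S = τ·I and (Y − S/2)² = μ₂²·I hold if and only if b = τ − c·x and a² − x·c² + x/4 + (μ₁²−μ₂²)·c − (μ₁²+μ₂²)/2 = 0. In particular, the map (S,Y) ↦ (a, c, x) is a bijection from the set of such solutions onto the surface {(a,c,x) ∈ ℂ³ : a² − x·c² + x/4 + (μ₁²−μ₂²)·c − (μ₁²+μ₂²)/2 = 0}. -/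
open Matrix

lemma slice_aux (μ₁ μ₂ x a b c : ℂ) :
    ((!![0, x; 1, 0] : Matrix (Fin 2) (Fin 2) ℂ) * !![a, b; c, -a]
        + !![a, b; c, -a] * !![0, x; 1, 0] = (μ₁^2 - μ₂^2) • (1 : Matrix (Fin 2) (Fin 2) ℂ) ∧
      ((!![a, b; c, -a] : Matrix (Fin 2) (Fin 2) ℂ)
          - (1/2 : ℂ) • !![0, x; 1, 0]) ^ 2 = μ₂^2 • (1 : Matrix (Fin 2) (Fin 2) ℂ))
    ↔ (b = (μ₁^2 - μ₂^2) - c * x ∧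
        a^2 - x * c^2 + x/4 + (μ₁^2 - μ₂^2) * c - (μ₁^2 + μ₂^2)/2 = 0) := by
  constructor
  · rintro ⟨h1, h2⟩
    rw [← Matrix.ext_iff] at h1 h2
    simp only [pow_two] at h2
    simp only [Matrix.add_apply, Matrix.mul_apply, Matrix.sub_apply, Matrix.smul_apply,
      Matrix.one_apply, Fin.sum_univ_two, Fin.forall_fin_two, smul_eq_mul,
      Matrix.cons_val', Matrix.cons_val_zero, Matrix.cons_val_one, Matrix.head_cons,
      Matrix.empty_val', Matrix.cons_val_fin_one] at h1 h2
    norm_num at h1 h2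
    obtain ⟨e00, -⟩ := h1
    obtain ⟨f00, -⟩ := h2
    refine ⟨by linear_combination e00.1, by linear_combination f00.1 - (c - 1/2) * e00.1⟩
  · rintro ⟨hb, hs⟩
    subst hb
    constructor
    · ext i j
      fin_cases i <;> fin_cases j <;>
        simp [Matrix.mul_apply, Fin.sum_univ_two, Matrix.one_apply] <;> ring
    · ext i j
      fin_cases i <;> fin_cases j <;>
        simp [pow_two, Matrix.mul_apply, Fin.sum_univ_two, Matrix.one_apply] <;>
        first
          | ring1
          | linear_combination hs

/-- For 2×2 matrices `S = !![0, x; 1, 0]`, `Y = !![a, b; c, -a]`, the equations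
`S·Y + Y·S = (μ₁² - μ₂²)·I` and `(Y - S/2)² = μ₂²·I` hold iff `b = τ - c·x` and
`a² - x·c² + x/4 + (μ₁² - μ₂²)·c - (μ₁² + μ₂²)/2 = 0`; moreover `(S,Y) ↦ (a,c,x)` is a
bijection from the solution set onto the deformed `D₂`-surface. -/
theorem slice_GL2_is_D2_surface (μ₁ μ₂ : ℂ) :
    (∀ x a b c : ℂ,
      ((!![0, x; 1, 0] : Matrix (Fin 2) (Fin 2) ℂ) * !![a, b; c, -a]
          + !![a, b; c, -a] * !![0, x; 1, 0] = (μ₁^2 - μ₂^2) • (1 : Matrix (Fin 2) (Fin 2) ℂ) ∧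
        ((!![a, b; c, -a] : Matrix (Fin 2) (Fin 2) ℂ)
            - (1/2 : ℂ) • !![0, x; 1, 0]) ^ 2 = μ₂^2 • (1 : Matrix (Fin 2) (Fin 2) ℂ))
      ↔ (b = (μ₁^2 - μ₂^2) - c * x ∧
          a^2 - x * c^2 + x/4 + (μ₁^2 - μ₂^2) * c - (μ₁^2 + μ₂^2)/2 = 0)) ∧
    Set.BijOn
      (fun P : Matrix (Fin 2) (Fin 2) ℂ × Matrix (Fin 2) (Fin 2) ℂ =>
        (P.2 0 0, P.2 1 0, P.1 0 1))
      {P : Matrix (Fin 2) (Fin 2) ℂ × Matrix (Fin 2) (Fin 2) ℂ |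
        (∃ x a b c : ℂ, P.1 = !![0, x; 1, 0] ∧ P.2 = !![a, b; c, -a]) ∧
        P.1 * P.2 + P.2 * P.1 = (μ₁^2 - μ₂^2) • 1 ∧
        (P.2 - (1/2 : ℂ) • P.1) ^ 2 = μ₂^2 • 1}
      {p : ℂ × ℂ × ℂ |
        p.1^2 - p.2.2 * p.2.1^2 + p.2.2/4 + (μ₁^2 - μ₂^2) * p.2.1 - (μ₁^2 + μ₂^2)/2 = 0} := by
  refine ⟨fun x a b c => slice_aux μ₁ μ₂ x a b c, ?_, ?_, ?_⟩
  · rintro ⟨P1, P2⟩ ⟨⟨x, a, b, c, h1, h2⟩, he1, he2⟩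
    subst h1; subst h2
    have := ((slice_aux μ₁ μ₂ x a b c).mp ⟨he1, he2⟩).2
    simpa using this
  · rintro ⟨P1, P2⟩ ⟨⟨x, a, b, c, h1, h2⟩, he1, he2⟩ ⟨Q1, Q2⟩
      ⟨⟨x', a', b', c', g1, g2⟩, ge1, ge2⟩ him
    subst h1; subst h2; subst g1; subst g2
    simp only [Prod.mk.injEq] at him
    obtain ⟨ha, hc, hx⟩ := him
    have hb := ((slice_aux μ₁ μ₂ x a b c).mp ⟨he1, he2⟩).1
    have hb' := ((slice_aux μ₁ μ₂ x' a' b' c').mp ⟨ge1, ge2⟩).1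
    subst ha; subst hc; subst hx
    simp [hb, hb']
  · rintro ⟨a, c, x⟩ hp
    refine ⟨(!![0, x; 1, 0], !![a, (μ₁^2 - μ₂^2) - c * x; c, -a]),
      ⟨⟨x, a, (μ₁^2 - μ₂^2) - c * x, c, rfl, rfl⟩, ?_, ?_⟩, ?_⟩
    · exact ((slice_aux μ₁ μ₂ x a ((μ₁^2 - μ₂^2) - c * x) c).mpr ⟨rfl, hp⟩).1
    · exact ((slice_aux μ₁ μ₂ x a ((μ₁^2 - μ₂^2) - c * x) c).mpr ⟨rfl, hp⟩).2
    · simp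
end

section
/- Let n ≥ 1, let μ₁, μ₂ ∈ ℂ with μ₁ ≠ 0 and μ₂ ≠ 0, and let d₁, d₂ ∈ ℤ with |d₁| + |d₂| > 2. If A and B are n×n complex matrices with A² = μ₁²·I, B² = μ₂²·I, tr A = d₁·μ₁ and tr B = d₂·μ₂, then A + B is not a matrix in companion form. -/
open Matrix

/-- A square matrix is in companion form if its subdiagonal entries are `1`, its last column
is arbitrary, and all other entries vanish. -/
def IsCompanionForm {n : ℕ} (S : Matrix (Fin n) (Fin n) ℂ) : Prop :=
  ∀ i j : Fin n, (j : ℕ) + 1 < n →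
    S i j = if (i : ℕ) = (j : ℕ) + 1 then 1 else 0

/-- Rank is subadditive for matrices over `ℂ`. -/
lemma aux_rank_add_le {n : ℕ} (A B : Matrix (Fin n) (Fin n) ℂ) :
    (A + B).rank ≤ A.rank + B.rank := by
  simp only [Matrix.rank]
  have hle : LinearMap.range (A + B).mulVecLin ≤
      LinearMap.range A.mulVecLin ⊔ LinearMap.range B.mulVecLin := by
    rintro x ⟨y, rfl⟩
    have hy : (A + B).mulVecLin y = A.mulVecLin y + B.mulVecLin y := by
      simp [Matrix.mulVecLin_add]
    rw [hy]
    exact Submodule.add_mem_sup ⟨y, rfl⟩ ⟨y, rfl⟩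
  exact (Submodule.finrank_mono hle).trans
    (Submodule.finrank_add_le_finrank_add_finrank _ _)

/-- The trace of an idempotent matrix equals its rank. -/
lemma aux_trace_idem {n : ℕ} {P : Matrix (Fin n) (Fin n) ℂ} (h : P * P = P) :
    P.trace = (P.rank : ℂ) := by
  have hf : P.mulVecLin ∘ₗ P.mulVecLin = P.mulVecLin := by
    rw [← Matrix.mulVecLin_mul, h]
  obtain ⟨p, hp⟩ := (LinearMap.isProj_iff_isIdempotentElem _).mpr hf
  have hrange : LinearMap.range P.mulVecLin = p := by
    apply le_antisymm
    · rintro x ⟨y, rfl⟩; exact hp.map_mem y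
    · intro x hx; exact ⟨x, hp.map_id x hx⟩
  have htr := hp.trace
  rw [LinearMap.trace_eq_matrix_trace ℂ (Pi.basisFun ℂ (Fin n)),
    LinearMap.toMatrix_eq_toMatrix'] at htr
  have h2 : LinearMap.toMatrix' P.mulVecLin = P := LinearMap.toMatrix'_toLin' P
  rw [h2] at htr
  rw [htr, Matrix.rank, hrange]

/-- For an idempotent matrix, `rank P + rank (1 - P) = n`. -/
lemma aux_rank_idem {n : ℕ} {P : Matrix (Fin n) (Fin n) ℂ} (h : P * P = P) :
    P.rank + (1 - P).rank = n := by
  have h0 : P * (1 - P) = 0 := by rw [mul_sub, mul_one, h, sub_self]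
  have h1 := Matrix.rank_add_rank_le_card_of_mul_eq_zero h0
  rw [Fintype.card_fin] at h1
  have h2 : (n : ℕ) ≤ P.rank + (1 - P).rank := by
    have := aux_rank_add_le P (1 - P)
    rwa [add_sub_cancel, Matrix.rank_one, Fintype.card_fin] at this
  omega

/-- Scaling by a nonzero scalar preserves the rank. -/
lemma aux_rank_smul {n : ℕ} (c : ℂ) (hc : c ≠ 0) (M : Matrix (Fin n) (Fin n) ℂ) :
    (c • M).rank = M.rank := by
  have h1 : c • M = (c • (1 : Matrix (Fin n) (Fin n) ℂ)) * M := by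
    rw [smul_mul_assoc, one_mul]
  rw [h1]
  apply Matrix.rank_mul_eq_right_of_isUnit_det
  rw [Matrix.det_smul, Matrix.det_one, mul_one]
  exact isUnit_iff_ne_zero.mpr (pow_ne_zero _ hc)

/-- Key rank computation for an `A` with `A² = μ²·1`. -/
lemma aux_key {n : ℕ} (μ : ℂ) (hμ : μ ≠ 0) (d : ℤ) (A : Matrix (Fin n) (Fin n) ℂ)
    (hA : A ^ 2 = μ ^ 2 • 1) (htr : A.trace = (d : ℂ) * μ)
    (ε : ℂ) (hε : ε = 1 ∨ ε = -1) :
    2 * (((A - (ε * μ) • 1).rank : ℕ) : ℂ) = (n : ℂ) - ε * d := by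
  have hε2 : ε * ε = 1 := by rcases hε with h | h <;> rw [h] <;> ring
  have hεne : ε ≠ 0 := by rcases hε with h | h <;> rw [h] <;> norm_num
  have hεμ : ε * μ ≠ 0 := mul_ne_zero hεne hμ
  have hcne : (2 * (ε * μ)) ≠ 0 := mul_ne_zero two_ne_zero hεμ
  set c : ℂ := (2 * (ε * μ))⁻¹ with hc
  have hA2 : A * A = μ ^ 2 • 1 := by rw [← sq]; exact hA
  set P : Matrix (Fin n) (Fin n) ℂ := c • (A + (ε * μ) • 1) with hP
  have hsq : (A + (ε * μ) • 1) * (A + (ε * μ) • 1)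
      = (2 * (ε * μ)) • (A + (ε * μ) • 1) := by
    simp only [add_mul, mul_add, smul_mul_assoc, mul_smul_comm, one_mul, mul_one, hA2]
    match_scalars
    · linear_combination (-(μ ^ 2)) * hε2
    · ring
  have hPP : P * P = P := by
    rw [hP, smul_mul_assoc, mul_smul_comm, smul_smul, hsq, smul_smul]
    congr 1
    rw [hc]
    field_simp
  have htrace : P.trace = c * ((d : ℂ) * μ + (ε * μ) * n) := by
    rw [hP, Matrix.trace_smul, Matrix.trace_add, Matrix.trace_smul, Matrix.trace_one, htr]
    simp only [smul_eq_mul, Fintype.card_fin]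
    try ring
  have hrankP : ((P.rank : ℕ) : ℂ) = c * ((d : ℂ) * μ + (ε * μ) * n) := by
    rw [← aux_trace_idem hPP, htrace]
  have hsum : ((P.rank : ℕ) : ℂ) + (((1 - P).rank : ℕ) : ℂ) = (n : ℂ) := by
    exact_mod_cast congrArg (Nat.cast : ℕ → ℂ) (aux_rank_idem hPP)
  have hAP : A - (ε * μ) • 1 = (-(2 * (ε * μ))) • (1 - P) := by
    rw [hP, smul_sub, smul_smul]
    have h2ac : (-(2 * (ε * μ))) * c = -1 := by
      rw [hc]; field_simp
    rw [h2ac]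
    simp only [neg_smul, one_smul, smul_neg]
    module
  have hr : (A - (ε * μ) • 1).rank = (1 - P).rank := by
    rw [hAP]; exact aux_rank_smul _ (neg_ne_zero.mpr hcne) _
  rw [hr]
  have h1 : (((1 - P).rank : ℕ) : ℂ) = (n : ℂ) - c * ((d : ℂ) * μ + (ε * μ) * n) := by
    linear_combination hsum - hrankP
  rw [h1, hc]
  field_simp
  ring_nf
  linear_combination (d : ℂ) * hε2

/-- A companion-form matrix minus any scalar has rank at least `n - 1`. -/
lemma aux_companion {n : ℕ} (S : Matrix (Fin n) (Fin n) ℂ) (hS : IsCompanionForm S)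
    (c : ℂ) : n - 1 ≤ (S - c • 1).rank := by
  classical
  set X := S - c • 1 with hX
  let r : Fin (n - 1) → Fin n := fun i => ⟨(i : ℕ) + 1, by omega⟩
  let q : Fin (n - 1) → Fin n := fun j => ⟨(j : ℕ), by omega⟩
  let P : Matrix (Fin (n - 1)) (Fin n) ℂ := Matrix.of fun i k => if k = r i then 1 else 0
  let Q : Matrix (Fin n) (Fin (n - 1)) ℂ := Matrix.of fun k j => if k = q j then 1 else 0
  set M : Matrix (Fin (n - 1)) (Fin (n - 1)) ℂ := X.submatrix r q with hMdef
  have hM : P * X * Q = M := by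
    ext i j
    simp [P, Q, M, Matrix.mul_apply, ite_mul, mul_ite, Finset.sum_ite_eq, Finset.sum_ite_eq']
  have hMij : ∀ i j : Fin (n - 1), M i j =
      (if i = j then 1 else 0) - c * (if (i : ℕ) + 1 = (j : ℕ) then 1 else 0) := by
    intro i j
    have hj : ((q j : Fin n) : ℕ) + 1 < n := by
      have := j.2; simp only [q]; omega
    have hSij := hS (r i) (q j) hj
    have h1 : ((r i : Fin n) : ℕ) = (i : ℕ) + 1 := rfl
    have h2 : ((q j : Fin n) : ℕ) = (j : ℕ) := rfl
    simp only [hMdef, Matrix.submatrix_apply, hX, Matrix.sub_apply, Matrix.smul_apply,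
      Matrix.one_apply, smul_eq_mul, hSij, h1, h2]
    congr 1
    · simp only [Nat.add_right_cancel_iff]
      congr 1
      simp [Fin.ext_iff]
    · congr 1
      have : (r i = q j) ↔ ((i : ℕ) + 1 = (j : ℕ)) := by
        rw [Fin.ext_iff, h1, h2]
      simp [this]
  have htri : M.BlockTriangular id := by
    intro i j hij
    simp only [id] at hij
    rw [hMij i j]
    have h1 : ¬ (i = j) := by intro h; exact absurd h (by intro h; subst h; exact lt_irrefl _ hij)
    have h2 : ¬ ((i : ℕ) + 1 = (j : ℕ)) := by
      have : (j : ℕ) < (i : ℕ) := hij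
      omega
    simp [h1, h2]
  have hdet : M.det = 1 := by
    rw [Matrix.det_of_upperTriangular htri]
    have : ∀ i : Fin (n - 1), M i i = 1 := by
      intro i
      rw [hMij i i]
      simp
    simp [this]
  have hunit : IsUnit M := (Matrix.isUnit_iff_isUnit_det M).mpr (by rw [hdet]; exact isUnit_one)
  have hrM : M.rank = n - 1 := by rw [Matrix.rank_of_isUnit M hunit, Fintype.card_fin]
  calc n - 1 = M.rank := hrM.symm
    _ = (P * X * Q).rank := by rw [hM]
    _ ≤ (P * X).rank := Matrix.rank_mul_le_left _ _
    _ ≤ X.rank := Matrix.rank_mul_le_right _ _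

/-- if `A² = μ₁²·I`, `B² = μ₂²·I`, `tr A = d₁μ₁`, `tr B = d₂μ₂` with
`μ₁, μ₂ ≠ 0` and `|d₁| + |d₂| > 2`, then `A + B` is not in companion form
(the regular Slodowy slice to the sum of the two orbits is empty). -/
theorem slice_empty_of_two_lt_abs_add_abs (n : ℕ) (hn : 1 ≤ n) (μ₁ μ₂ : ℂ)
    (h₁ : μ₁ ≠ 0) (h₂ : μ₂ ≠ 0) (d₁ d₂ : ℤ) (hd : 2 < |d₁| + |d₂|)
    (A B : Matrix (Fin n) (Fin n) ℂ)
    (hA : A ^ 2 = μ₁^2 • 1) (hB : B ^ 2 = μ₂^2 • 1)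
    (htrA : A.trace = (d₁ : ℂ) * μ₁) (htrB : B.trace = (d₂ : ℂ) * μ₂) :
    ¬ IsCompanionForm (A + B) := by
  intro hS
  set ε₁ : ℂ := if 0 ≤ d₁ then 1 else -1 with hε₁def
  set ε₂ : ℂ := if 0 ≤ d₂ then 1 else -1 with hε₂def
  have hε₁ : ε₁ = 1 ∨ ε₁ = -1 := by rw [hε₁def]; split_ifs <;> simp
  have hε₂ : ε₂ = 1 ∨ ε₂ = -1 := by rw [hε₂def]; split_ifs <;> simp
  have habs₁ : ε₁ * (d₁ : ℂ) = ((|d₁| : ℤ) : ℂ) := by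
    rw [hε₁def]; split_ifs with h
    · rw [abs_of_nonneg h, one_mul]
    · rw [abs_of_neg (by omega)]; push_cast; ring
  have habs₂ : ε₂ * (d₂ : ℂ) = ((|d₂| : ℤ) : ℂ) := by
    rw [hε₂def]; split_ifs with h
    · rw [abs_of_nonneg h, one_mul]
    · rw [abs_of_neg (by omega)]; push_cast; ring
  have k₁ := aux_key μ₁ h₁ d₁ A hA htrA ε₁ hε₁
  have k₂ := aux_key μ₂ h₂ d₂ B hB htrB ε₂ hε₂
  rw [habs₁] at k₁
  rw [habs₂] at k₂
  set r₁ := (A - (ε₁ * μ₁) • 1).rank with hr₁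
  set r₂ := (B - (ε₂ * μ₂) • 1).rank with hr₂
  have e₁ : (2 * (r₁ : ℤ)) = (n : ℤ) - |d₁| := by
    have : ((2 * (r₁ : ℤ) : ℤ) : ℂ) = (((n : ℤ) - |d₁| : ℤ) : ℂ) := by
      push_cast
      linear_combination k₁
    exact_mod_cast this
  have e₂ : (2 * (r₂ : ℤ)) = (n : ℤ) - |d₂| := by
    have : ((2 * (r₂ : ℤ) : ℤ) : ℂ) = (((n : ℤ) - |d₂| : ℤ) : ℂ) := by
      push_cast
      linear_combination k₂
    exact_mod_cast this
  have hsplit : (A + B) - (ε₁ * μ₁ + ε₂ * μ₂) • 1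
      = (A - (ε₁ * μ₁) • 1) + (B - (ε₂ * μ₂) • 1) := by
    rw [add_smul]; abel
  have hle : ((A + B) - (ε₁ * μ₁ + ε₂ * μ₂) • 1).rank ≤ r₁ + r₂ := by
    rw [hsplit]; exact aux_rank_add_le _ _
  have hge := aux_companion (A + B) hS (ε₁ * μ₁ + ε₂ * μ₂)
  set a₁ := |d₁| with ha₁
  set a₂ := |d₂| with ha₂
  omega
end

section
/- Let m ≥ 1, μ₁, μ₂ ∈ ℂ, and set τ = μ₁² − μ₂². Let S₀, Y₀ be 2m×2m complex matrices, let v₁, v₂ be row vectors of length 2m, let e = (0,…,0,1), and form the (2m+2)×(2m+2) block matrices S = [[S₀, 0, 0],[e, μ₁+μ₂, 0],[e, 0, μ₁−μ₂]] and Y = [[Y₀, 0, 0],[v₁, (μ₁−μ₂)/2, 0],[v₂, 0, (μ₁+μ₂)/2]], as well as the (2m+1)×(2m+1) block matrices S₁ = [[S₀, 0],[e, μ₁+μ₂]], Y₁ = [[Y₀, 0],[v₁, (μ₁−μ₂)/2]] and S₂ = [[S₀, 0],[e, μ₁−μ₂]], Y₂ = [[Y₀, 0],[v₂, (μ₁+μ₂)/2]].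 Then the pair (S,Y) satisfies S·Y + Y·S = τ·I and (Y − S/2)² = μ₂²·I if and only if both pairs (S₁,Y₁) and (S₂,Y₂) satisfy these two equations (with identity matrices of the appropriate sizes). -/
open Matrix

theorem blk1 {n ι : Type*} [Fintype n] [Fintype ι] [DecidableEq n] [DecidableEq ι]
    (S₀ Y₀ : Matrix n n ℂ) (Cs Cy : Matrix ι n ℂ) (Ds Dy : Matrix ι ι ℂ) (τ : ℂ) :
    fromBlocks S₀ 0 Cs Ds * fromBlocks Y₀ 0 Cy Dy + fromBlocks Y₀ 0 Cy Dy * fromBlocks S₀ 0 Cs Ds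
      = τ • (1 : Matrix (n ⊕ ι) (n ⊕ ι) ℂ)
    ↔ (S₀ * Y₀ + Y₀ * S₀ = τ • 1) ∧ (Cs * Y₀ + Ds * Cy + (Cy * S₀ + Dy * Cs) = 0)
      ∧ (Ds * Dy + Dy * Ds = τ • 1) := by
  have h1 : (τ • (1 : Matrix (n ⊕ ι) (n ⊕ ι) ℂ)) = fromBlocks (τ • 1) 0 0 (τ • 1) := by
    rw [← fromBlocks_one, fromBlocks_smul]; simp
  rw [fromBlocks_multiply, fromBlocks_multiply, fromBlocks_add, h1, fromBlocks_inj]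
  simp [and_assoc]

theorem blk2 {n ι : Type*} [Fintype n] [Fintype ι] [DecidableEq n] [DecidableEq ι]
    (Z : Matrix n n ℂ) (W : Matrix ι n ℂ) (D : Matrix ι ι ℂ) (σ : ℂ) :
    (fromBlocks Z 0 W D) ^ 2 = σ • (1 : Matrix (n ⊕ ι) (n ⊕ ι) ℂ)
    ↔ Z ^ 2 = σ • 1 ∧ (W * Z + D * W = 0) ∧ D ^ 2 = σ • 1 := by
  have h1 : (σ • (1 : Matrix (n ⊕ ι) (n ⊕ ι) ℂ)) = fromBlocks (σ • 1) 0 0 (σ • 1) := by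
    rw [← fromBlocks_one, fromBlocks_smul]; simp
  rw [pow_two, pow_two, pow_two, fromBlocks_multiply, h1, fromBlocks_inj]
  simp [and_assoc]

theorem blk3 {n ι : Type*} (A A' : Matrix n n ℂ) (C C' : Matrix ι n ℂ) (D D' : Matrix ι ι ℂ) (x : ℂ) :
    fromBlocks A 0 C D - x • fromBlocks A' 0 C' D'
      = fromBlocks (A - x • A') 0 (C - x • C') (D - x • D') := by
  ext (i | i) (j | j) <;> simp [fromBlocks]

/-- with the block matrices
`S = [[S₀,0,0],[e,μ₁+μ₂,0],[e,0,μ₁-μ₂]]`, `Y = [[Y₀,0,0],[v₁,(μ₁-μ₂)/2,0],[v₂,0,(μ₁+μ₂)/2]]`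
of size `2m+2` and the block matrices `S₁ = [[S₀,0],[e,μ₁+μ₂]]`, `Y₁ = [[Y₀,0],[v₁,(μ₁-μ₂)/2]]`,
`S₂ = [[S₀,0],[e,μ₁-μ₂]]`, `Y₂ = [[Y₀,0],[v₂,(μ₁+μ₂)/2]]` of size `2m+1`
(where `e = (0,…,0,1)`), the pair `(S,Y)` satisfies `S·Y + Y·S = τ·I`,
`(Y - S/2)² = μ₂²·I` iff both `(S₁,Y₁)` and `(S₂,Y₂)` do. -/
theorem D0m_is_fibred_product (m : ℕ) (hm : 1 ≤ m) (μ₁ μ₂ : ℂ)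
    (S₀ Y₀ : Matrix (Fin (2 * m)) (Fin (2 * m)) ℂ) (v₁ v₂ : Fin (2 * m) → ℂ) :
    (letI e : Fin (2 * m) → ℂ := fun j => if (j : ℕ) = 2 * m - 1 then 1 else 0
     letI S : Matrix (Fin (2 * m) ⊕ Fin 2) (Fin (2 * m) ⊕ Fin 2) ℂ :=
       Matrix.fromBlocks S₀ 0 (Matrix.of fun _ j => e j) !![μ₁ + μ₂, 0; 0, μ₁ - μ₂]
     letI Y : Matrix (Fin (2 * m) ⊕ Fin 2) (Fin (2 * m) ⊕ Fin 2) ℂ :=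
       Matrix.fromBlocks Y₀ 0 (Matrix.of fun i j => if i = 0 then v₁ j else v₂ j)
         !![(μ₁ - μ₂) / 2, 0; 0, (μ₁ + μ₂) / 2]
     S * Y + Y * S = (μ₁^2 - μ₂^2) • 1 ∧ (Y - (1/2 : ℂ) • S) ^ 2 = μ₂^2 • 1)
    ↔
    ((letI e : Fin (2 * m) → ℂ := fun j => if (j : ℕ) = 2 * m - 1 then 1 else 0
      letI S₁ : Matrix (Fin (2 * m) ⊕ Fin 1) (Fin (2 * m) ⊕ Fin 1) ℂ :=
        Matrix.fromBlocks S₀ 0 (Matrix.of fun _ j => e j) (Matrix.of fun _ _ => μ₁ + μ₂)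
      letI Y₁ : Matrix (Fin (2 * m) ⊕ Fin 1) (Fin (2 * m) ⊕ Fin 1) ℂ :=
        Matrix.fromBlocks Y₀ 0 (Matrix.of fun _ j => v₁ j)
          (Matrix.of fun _ _ => (μ₁ - μ₂) / 2)
      S₁ * Y₁ + Y₁ * S₁ = (μ₁^2 - μ₂^2) • 1 ∧ (Y₁ - (1/2 : ℂ) • S₁) ^ 2 = μ₂^2 • 1)
     ∧
     (letI e : Fin (2 * m) → ℂ := fun j => if (j : ℕ) = 2 * m - 1 then 1 else 0
      letI S₂ : Matrix (Fin (2 * m) ⊕ Fin 1) (Fin (2 * m) ⊕ Fin 1) ℂ :=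
        Matrix.fromBlocks S₀ 0 (Matrix.of fun _ j => e j) (Matrix.of fun _ _ => μ₁ - μ₂)
      letI Y₂ : Matrix (Fin (2 * m) ⊕ Fin 1) (Fin (2 * m) ⊕ Fin 1) ℂ :=
        Matrix.fromBlocks Y₀ 0 (Matrix.of fun _ j => v₂ j)
          (Matrix.of fun _ _ => (μ₁ + μ₂) / 2)
      S₂ * Y₂ + Y₂ * S₂ = (μ₁^2 - μ₂^2) • 1 ∧ (Y₂ - (1/2 : ℂ) • S₂) ^ 2 = μ₂^2 • 1)) := by
  simp only [blk3, blk1, blk2]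
  simp only [← Matrix.ext_iff, pow_two, Matrix.add_apply, Matrix.mul_apply, Matrix.sub_apply, Matrix.smul_apply, Matrix.of_apply, Matrix.zero_apply, smul_eq_mul, Matrix.one_apply, Fin.forall_fin_two, Fin.forall_fin_one, Fin.sum_univ_two, Fin.sum_univ_one, Matrix.cons_val_zero, Matrix.cons_val_one, Matrix.head_cons, Matrix.head_fin_const, if_true, one_ne_zero, if_false, mul_zero, zero_mul, add_zero, zero_add, mul_one, Fin.zero_eq_one_iff, Fin.one_eq_zero_iff, Nat.succ_ne_self, ite_false, ite_true, sub_self, sub_zero, true_and, and_true]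
  tauto
end

section
/- Let n ≥ 1. The map sending a triple of polynomials (x, y, q), where q ∈ ℂ[X] is monic of degree n, x and y have degree at most n−1, and x(X)·y(X) ≡ X (mod q(X)), to the triple of matrices (B₁, B₂, S) with S the companion matrix of q, B₁ = x(S), and B₂ = y(S) (polynomial evaluation at the matrix S), is a bijection onto the set of triples (B₁, B₂, S) of n×n complex matrices such that S is in companion form and B₁·B₂ = S = B₂·B₁. -/
open Matrix Polynomial

/-- The `n × n` companion matrix of a (monic, degree `n`) polynomial `p`: subdiagonal entries
`1`, last column `-p.coeff i`, all other entries `0`. -/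
noncomputable def companionMatrix (n : ℕ) (p : Polynomial ℂ) : Matrix (Fin n) (Fin n) ℂ :=
  Matrix.of fun i j =>
    if (j : ℕ) + 1 < n then (if (i : ℕ) = (j : ℕ) + 1 then 1 else 0)
    else -p.coeff (i : ℕ)

namespace TransAux

variable {n : ℕ}

/-- standard basis vector -/
noncomputable def ee (k : Fin n) : Fin n → ℂ := Pi.single k 1

lemma mulVec_ee (M : Matrix (Fin n) (Fin n) ℂ) (j : Fin n) :
    M *ᵥ ee j = fun i => M i j := by
  ext i; simp [ee]

lemma ext_of_cols {M N : Matrix (Fin n) (Fin n) ℂ}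
    (h : ∀ j, M *ᵥ ee j = N *ᵥ ee j) : M = N := by
  ext i j
  have := congrFun (h j) i
  simpa [mulVec_ee] using this

lemma comp_mulVec {S : Matrix (Fin n) (Fin n) ℂ} (hS : IsCompanionForm S)
    {j : Fin n} (hj : (j : ℕ) + 1 < n) :
    S *ᵥ ee j = ee ⟨(j : ℕ) + 1, hj⟩ := by
  have := congrFun (mulVec_ee S j)
  ext i
  rw [this i, hS i j hj]
  simp [ee, Pi.single_apply, Fin.ext_iff, eq_comm]

lemma comp_pow_mulVec {S : Matrix (Fin n) (Fin n) ℂ} (hS : IsCompanionForm S)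
    (hn : 1 ≤ n) : ∀ m (hm : m < n), S ^ m *ᵥ ee ⟨0, hn⟩ = ee ⟨m, hm⟩ := by
  intro m
  induction m with
  | zero => intro hm; simp [one_mulVec]
  | succ m ih =>
    intro hm
    have hm' : m < n := Nat.lt_of_succ_lt hm
    rw [pow_succ', ← mulVec_mulVec, ih hm', comp_mulVec hS (j := ⟨m, hm'⟩) hm]

/-- the coefficient-building polynomial of a vector -/
noncomputable def pOf (c : Fin n → ℂ) : Polynomial ℂ :=
  ∑ i : Fin n, C (c i) * X ^ (i : ℕ)

lemma pOf_degree_lt (c : Fin n → ℂ) : (pOf c).degree < (n : ℕ) := by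
  classical
  apply lt_of_le_of_lt (Polynomial.degree_sum_le _ _)
  rw [Finset.sup_lt_iff (by exact_mod_cast WithBot.bot_lt_coe n : (⊥ : WithBot ℕ) < (n : ℕ))]
  intro i _
  refine lt_of_le_of_lt (Polynomial.degree_C_mul_X_pow_le (i : ℕ) (c i)) ?_
  exact_mod_cast i.2

lemma pOf_coeff (c : Fin n → ℂ) (m : ℕ) (hm : m < n) :
    (pOf c).coeff m = c ⟨m, hm⟩ := by
  classical
  rw [pOf, Polynomial.finset_sum_coeff]
  rw [Finset.sum_eq_single (⟨m, hm⟩ : Fin n)]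
  · simp
  · intro b _ hb
    simp only [coeff_C_mul, coeff_X_pow]
    rw [if_neg, mul_zero]
    exact fun h => hb (Fin.ext h.symm)
  · simp

lemma sum_mulVec {ι : Type*} (s : Finset ι) (f : ι → Matrix (Fin n) (Fin n) ℂ)
    (v : Fin n → ℂ) : (∑ k ∈ s, f k) *ᵥ v = ∑ k ∈ s, f k *ᵥ v :=
  map_sum (Matrix.mulVec.addMonoidHomLeft v) f s

lemma aeval_mulVec_ee0 (hn : 1 ≤ n) {S : Matrix (Fin n) (Fin n) ℂ}
    (hS : IsCompanionForm S) {p : Polynomial ℂ} (hp : p.degree < (n : ℕ)) :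
    (aeval S p) *ᵥ ee ⟨0, hn⟩ = fun i : Fin n => p.coeff (i : ℕ) := by
  have hnd : p.natDegree < n := by
    by_cases h0 : p = 0
    · simpa [h0] using (show 0 < n from hn)
    · exact (Polynomial.natDegree_lt_iff_degree_lt h0).2 hp
  rw [Polynomial.aeval_eq_sum_range' hnd, ← Fin.sum_univ_eq_sum_range]
  ext i
  rw [sum_mulVec]
  simp only [Matrix.smul_mulVec]
  have : ∀ k : Fin n, S ^ (k : ℕ) *ᵥ ee ⟨0, hn⟩ = ee k := fun k => by
    rw [comp_pow_mulVec hS hn k k.2]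
  simp only [this]
  rw [Finset.sum_apply]
  simp [ee, Pi.single_apply]


lemma aeval_comm_pow (S : Matrix (Fin n) (Fin n) ℂ) (p : Polynomial ℂ) (j : ℕ) :
    S ^ j * aeval S p = aeval S p * S ^ j := by
  have h : aeval S (X ^ j : Polynomial ℂ) = S ^ j := by simp
  rw [← h, ← _root_.map_mul, mul_comm, _root_.map_mul]

/-- last index -/
def lastIdx (hn : 1 ≤ n) : Fin n := ⟨n - 1, Nat.sub_lt hn one_pos⟩

/-- the monic polynomial read off from the last column of a companion-form matrix -/
noncomputable def qOf (hn : 1 ≤ n) (S : Matrix (Fin n) (Fin n) ℂ) : Polynomial ℂ :=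
  X ^ n - pOf (fun i => S i (lastIdx hn))

lemma qOf_coeff_lt (hn : 1 ≤ n) (S : Matrix (Fin n) (Fin n) ℂ) {m : ℕ} (hm : m < n) :
    (qOf hn S).coeff m = -(S ⟨m, hm⟩ (lastIdx hn)) := by
  rw [qOf, Polynomial.coeff_sub, Polynomial.coeff_X_pow, if_neg (Nat.ne_of_lt hm),
    pOf_coeff _ m hm]
  ring

lemma qOf_coeff_n (hn : 1 ≤ n) (S : Matrix (Fin n) (Fin n) ℂ) :
    (qOf hn S).coeff n = 1 := by
  rw [qOf, Polynomial.coeff_sub, Polynomial.coeff_X_pow, if_pos rfl,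
    Polynomial.coeff_eq_zero_of_degree_lt (pOf_degree_lt _)]
  ring

lemma qOf_coeff_gt (hn : 1 ≤ n) (S : Matrix (Fin n) (Fin n) ℂ) {m : ℕ} (hm : n < m) :
    (qOf hn S).coeff m = 0 := by
  rw [qOf, Polynomial.coeff_sub, Polynomial.coeff_X_pow, if_neg (Nat.ne_of_gt hm),
    Polynomial.coeff_eq_zero_of_degree_lt ((pOf_degree_lt _).trans (by exact_mod_cast hm))]
  ring

lemma qOf_monic (hn : 1 ≤ n) (S : Matrix (Fin n) (Fin n) ℂ) : (qOf hn S).Monic := by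
  have : (pOf (fun i => S i (lastIdx hn))).degree < (X ^ n : Polynomial ℂ).degree := by
    rw [Polynomial.degree_X_pow]; exact pOf_degree_lt _
  simpa [qOf, sub_eq_add_neg] using
    (Polynomial.monic_X_pow n).add_of_left (by simpa using this)

lemma qOf_natDegree (hn : 1 ≤ n) (S : Matrix (Fin n) (Fin n) ℂ) :
    (qOf hn S).natDegree = n := by
  have : (pOf (fun i => S i (lastIdx hn))).degree < (X ^ n : Polynomial ℂ).degree := by
    rw [Polynomial.degree_X_pow]; exact pOf_degree_lt _
  have hdeg : (qOf hn S).degree = (n : ℕ) := by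
    rw [qOf, sub_eq_add_neg, Polynomial.degree_add_eq_left_of_degree_lt (by simpa using this),
      Polynomial.degree_X_pow]
  exact Polynomial.natDegree_eq_of_degree_eq_some hdeg

lemma companion_qOf (hn : 1 ≤ n) {S : Matrix (Fin n) (Fin n) ℂ} (hS : IsCompanionForm S) :
    companionMatrix n (qOf hn S) = S := by
  ext i j
  by_cases hj : (j : ℕ) + 1 < n
  · rw [companionMatrix, Matrix.of_apply, if_pos hj, hS i j hj]
  · have hj' : (j : ℕ) = n - 1 := by omega
    have hjl : j = lastIdx hn := Fin.ext hj'
    rw [companionMatrix, Matrix.of_apply, if_neg hj, qOf_coeff_lt hn S i.2, hjl, neg_neg]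

lemma isCompanionForm_companion (p : Polynomial ℂ) :
    IsCompanionForm (companionMatrix n p) := by
  intro i j hj
  rw [companionMatrix, Matrix.of_apply, if_pos hj]

lemma qOf_companion (hn : 1 ≤ n) {q : Polynomial ℂ} (hq : q.Monic) (hqd : q.natDegree = n) :
    qOf hn (companionMatrix n q) = q := by
  have hlast : ¬ ((lastIdx hn : ℕ) + 1 < n) := by
    simp only [lastIdx]; omega
  ext m
  rcases lt_trichotomy m n with hm | hm | hm
  · rw [qOf_coeff_lt hn _ hm, companionMatrix, Matrix.of_apply, if_neg hlast, neg_neg]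
  · rw [hm, qOf_coeff_n, ← hqd, hq.coeff_natDegree]
  · rw [qOf_coeff_gt hn _ hm, Polynomial.coeff_eq_zero_of_natDegree_lt (by omega)]

lemma aeval_qOf (hn : 1 ≤ n) {S : Matrix (Fin n) (Fin n) ℂ} (hS : IsCompanionForm S) :
    aeval S (qOf hn S) = 0 := by
  have hcol0 : aeval S (qOf hn S) *ᵥ ee ⟨0, hn⟩ = 0 := by
    have h1 : S ^ n *ᵥ ee ⟨0, hn⟩ = fun i => S i (lastIdx hn) := by
      have hn1 : n - 1 < n := Nat.sub_lt hn one_pos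
      have : S ^ n = S * S ^ (n - 1) := by
        rw [← pow_succ']; congr 1; omega
      rw [this, ← mulVec_mulVec, comp_pow_mulVec hS hn (n-1) hn1]
      exact mulVec_ee S (lastIdx hn)
    have h2 : aeval S (pOf (fun i => S i (lastIdx hn))) *ᵥ ee ⟨0, hn⟩
        = fun i : Fin n => S i (lastIdx hn) := by
      rw [aeval_mulVec_ee0 hn hS (pOf_degree_lt _)]
      funext i
      rw [pOf_coeff _ _ i.2]
    rw [qOf, map_sub, Matrix.sub_mulVec, map_pow, Polynomial.aeval_X, h1, h2, sub_self]
  apply ext_of_cols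
  intro j
  rw [Matrix.zero_mulVec, ← comp_pow_mulVec hS hn j j.2, mulVec_mulVec,
    ← aeval_comm_pow, ← mulVec_mulVec, hcol0, Matrix.mulVec_zero]

lemma commute_eq_aeval (hn : 1 ≤ n) {S B : Matrix (Fin n) (Fin n) ℂ}
    (hS : IsCompanionForm S) (hB : B * S = S * B) :
    aeval S (pOf (fun i => B i ⟨0, hn⟩)) = B := by
  set p := pOf (fun i => B i ⟨0, hn⟩) with hp
  have hcol0 : aeval S p *ᵥ ee ⟨0, hn⟩ = B *ᵥ ee ⟨0, hn⟩ := by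
    rw [aeval_mulVec_ee0 hn hS (pOf_degree_lt _), mulVec_ee]
    funext i
    rw [pOf_coeff _ _ i.2]
  apply ext_of_cols
  intro j
  have hBS : B * S ^ (j : ℕ) = S ^ (j : ℕ) * B := Commute.pow_right hB (j : ℕ)
  rw [← comp_pow_mulVec hS hn j j.2, mulVec_mulVec, mulVec_mulVec,
    ← aeval_comm_pow, hBS, ← mulVec_mulVec, ← mulVec_mulVec, hcol0]

lemma aeval_injOn (hn : 1 ≤ n) {S : Matrix (Fin n) (Fin n) ℂ} (hS : IsCompanionForm S)
    {p p' : Polynomial ℂ} (hp : p.degree < (n : ℕ)) (hp' : p'.degree < (n : ℕ))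
    (h : aeval S p = aeval S p') : p = p' := by
  have := congrFun ((h ▸ aeval_mulVec_ee0 hn hS hp).symm.trans (aeval_mulVec_ee0 hn hS hp'))
  ext m
  by_cases hm : m < n
  · exact this ⟨m, hm⟩
  · rw [Polynomial.coeff_eq_zero_of_degree_lt, Polynomial.coeff_eq_zero_of_degree_lt]
    · exact hp'.trans_le (by exact_mod_cast Nat.le_of_not_lt hm)
    · exact hp.trans_le (by exact_mod_cast Nat.le_of_not_lt hm)

end TransAux

open TransAux

/-- `(x, y, q) ↦ (x(S), y(S), S)` with `S` the companion matrix of `q` is a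
bijection from triples with `q` monic of degree `n`, `deg x, deg y ≤ n-1` and
`x·y ≡ X (mod q)`, onto triples `(B₁, B₂, S)` of `n×n` matrices with `S` in companion form
and `B₁·B₂ = S = B₂·B₁`.  This is the coordinate description of the Hilbert scheme of `n`
points of `ℂ²` transverse to `π(x,y) = xy`. -/
theorem transverse_hilbert_C2 (n : ℕ) (hn : 1 ≤ n) :
    Set.BijOn
      (fun t : Polynomial ℂ × Polynomial ℂ × Polynomial ℂ =>
        ((Polynomial.aeval (companionMatrix n t.2.2)) t.1,
         (Polynomial.aeval (companionMatrix n t.2.2)) t.2.1,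
         companionMatrix n t.2.2))
      {t : Polynomial ℂ × Polynomial ℂ × Polynomial ℂ |
        t.2.2.Monic ∧ t.2.2.natDegree = n ∧
        t.1.degree < (n : ℕ) ∧ t.2.1.degree < (n : ℕ) ∧
        t.2.2 ∣ (t.1 * t.2.1 - X)}
      {P : Matrix (Fin n) (Fin n) ℂ × Matrix (Fin n) (Fin n) ℂ × Matrix (Fin n) (Fin n) ℂ |
        IsCompanionForm P.2.2 ∧ P.1 * P.2.1 = P.2.2 ∧ P.2.1 * P.1 = P.2.2} := by
  refine ⟨?_, ?_, ?_⟩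
  · -- MapsTo
    rintro ⟨x, y, q⟩ ⟨hqm, hqd, hx, hy, hdvd⟩
    replace hqm : q.Monic := hqm
    replace hqd : q.natDegree = n := hqd
    replace hdvd : q ∣ x * y - X := hdvd
    set S := companionMatrix n q with hSdef
    have hSC : IsCompanionForm S := isCompanionForm_companion q
    have hq0 : aeval S q = 0 := by
      have h := aeval_qOf hn (isCompanionForm_companion q)
      rwa [qOf_companion hn hqm hqd] at h
    obtain ⟨h, hh⟩ := hdvd
    have hxy : aeval S x * aeval S y = S := by
      rw [← _root_.map_mul]
      have hxyq : x * y = X + q * h := by linear_combination hh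
      rw [hxyq, map_add, _root_.map_mul, hq0, zero_mul, add_zero, aeval_X]
    have hyx : aeval S y * aeval S x = S := by
      rw [← _root_.map_mul, mul_comm, _root_.map_mul]; exact hxy
    exact ⟨hSC, hxy, hyx⟩
  · -- InjOn
    rintro ⟨x, y, q⟩ ⟨hqm, hqd, hx, hy, -⟩ ⟨x', y', q'⟩ ⟨hqm', hqd', hx', hy', -⟩ heq
    replace hqm : q.Monic := hqm
    replace hqd : q.natDegree = n := hqd
    replace hqm' : q'.Monic := hqm'
    replace hqd' : q'.natDegree = n := hqd'
    replace hx : x.degree < (n : ℕ) := hx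
    replace hy : y.degree < (n : ℕ) := hy
    replace hx' : x'.degree < (n : ℕ) := hx'
    replace hy' : y'.degree < (n : ℕ) := hy'
    simp only [Prod.mk.injEq] at heq
    obtain ⟨h1, h2, h3⟩ := heq
    have hqq : q = q' := by
      rw [← qOf_companion hn hqm hqd, ← qOf_companion hn hqm' hqd', h3]
    subst hqq
    have hSC : IsCompanionForm (companionMatrix n q) := isCompanionForm_companion q
    have hxx : x = x' := aeval_injOn hn hSC hx hx' h1
    have hyy : y = y' := aeval_injOn hn hSC hy hy' h2
    simp [hxx, hyy]
  · -- SurjOn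
    rintro ⟨B₁, B₂, S⟩ ⟨hSC, h12, h21⟩
    replace hSC : IsCompanionForm S := hSC
    replace h12 : B₁ * B₂ = S := h12
    replace h21 : B₂ * B₁ = S := h21
    set q := qOf hn S with hqdef
    have hB1S : B₁ * S = S * B₁ := by
      calc B₁ * S = (B₁ * B₂) * B₁ := by rw [← h21, mul_assoc]
        _ = S * B₁ := by rw [h12]
    have hB2S : B₂ * S = S * B₂ := by
      calc B₂ * S = (B₂ * B₁) * B₂ := by rw [← h12, mul_assoc]
        _ = S * B₂ := by rw [h21]
    set x := pOf (fun i => B₁ i ⟨0, hn⟩) with hxdef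
    set y := pOf (fun i => B₂ i ⟨0, hn⟩) with hydef
    have hxS : aeval S x = B₁ := commute_eq_aeval hn hSC hB1S
    have hyS : aeval S y = B₂ := commute_eq_aeval hn hSC hB2S
    have hSq : companionMatrix n q = S := companion_qOf hn hSC
    have hq0 : aeval S q = 0 := aeval_qOf hn hSC
    have hqmono : q.Monic := qOf_monic hn S
    have hdvd : q ∣ x * y - X := by
      rw [← Polynomial.modByMonic_eq_zero_iff_dvd hqmono]
      have h0 : aeval S (x * y - X) = 0 := by
        rw [map_sub, _root_.map_mul, hxS, hyS, aeval_X, h12, sub_self]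
      have hr0 : aeval S ((x * y - X) %ₘ q) = 0 := by
        have hc := congrArg (aeval S) (Polynomial.modByMonic_add_div (x * y - X) q)
        rw [map_add, _root_.map_mul, hq0, zero_mul, add_zero, h0] at hc
        exact hc
      have hqdeg : q.degree = (n : ℕ) := by
        rw [Polynomial.degree_eq_natDegree hqmono.ne_zero, qOf_natDegree hn S]
      have hrdeg : ((x * y - X) %ₘ q).degree < (n : ℕ) := by
        rw [← hqdeg]; exact Polynomial.degree_modByMonic_lt _ hqmono
      have : (x * y - X) %ₘ q = 0 :=
        aeval_injOn hn hSC hrdeg (by rw [Polynomial.degree_zero]; exact WithBot.bot_lt_coe n)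
          (by rw [hr0, map_zero])
      exact this
    refine ⟨⟨x, y, q⟩, ⟨hqmono, qOf_natDegree hn S, pOf_degree_lt _, pOf_degree_lt _, hdvd⟩, ?_⟩
    simp only [hSq]
    rw [hxS, hyS]
end

section
/- Let n ≥ 1 and let q ∈ ℂ[X] be monic of degree n. The map sending a pair of polynomials (x, y), each of degree at most n−1 in the variable X, to the polynomial p(u) = x(u²) + u·y(u²) of degree at most 2n−1, is a bijection from the set of pairs (x, y) with x(X)² − X·y(X)² ≡ 1 (mod q(X)) onto the set of polynomials p of degree at most 2n−1 with p(u)·p(−u) ≡ 1 (mod q(u²)). -/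
open Polynomial

private lemma coeff_phi_even (x y : Polynomial ℂ) (k : ℕ) :
    (x.comp (X ^ 2) + X * y.comp (X ^ 2)).coeff (2 * k) = x.coeff k := by
  rw [← expand_eq_comp_X_pow, ← expand_eq_comp_X_pow, coeff_add,
    coeff_expand (by norm_num : 0 < 2)]
  have h2 : (X * expand ℂ 2 y).coeff (2 * k) = 0 := by
    rcases k with _ | k
    · simp
    · have : 2 * (k + 1) = (2 * k + 1) + 1 := by ring
      rw [this, coeff_X_mul, coeff_expand (by norm_num : 0 < 2), if_neg (by omega)]
  rw [h2]
  simp [Nat.mul_div_cancel_left]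

private lemma coeff_phi_odd (x y : Polynomial ℂ) (k : ℕ) :
    (x.comp (X ^ 2) + X * y.comp (X ^ 2)).coeff (2 * k + 1) = y.coeff k := by
  rw [← expand_eq_comp_X_pow, ← expand_eq_comp_X_pow, coeff_add, coeff_X_mul,
    coeff_expand (by norm_num : 0 < 2), coeff_expand (by norm_num : 0 < 2)]
  have h1 : ¬ (2 ∣ 2 * k + 1) := by omega
  rw [if_neg h1, if_pos ⟨k, rfl⟩]
  simp [Nat.mul_div_cancel_left]

private lemma expand_dvd_of_dvd {q f : Polynomial ℂ} (h : q ∣ f) :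
    expand ℂ 2 q ∣ expand ℂ 2 f := by
  obtain ⟨c, rfl⟩ := h
  exact ⟨expand ℂ 2 c, by rw [map_mul]⟩

private lemma dvd_of_expand_dvd {q f : Polynomial ℂ} (hq : q.Monic)
    (h : expand ℂ 2 q ∣ expand ℂ 2 f) : q ∣ f := by
  have hf : f %ₘ q = f - q * (f /ₘ q) := by
    have h0 := modByMonic_add_div f q
    linear_combination h0
  have hmod : expand ℂ 2 q ∣ expand ℂ 2 (f %ₘ q) := by
    rw [hf, map_sub, map_mul]
    exact dvd_sub h (Dvd.intro _ rfl)
  by_cases hr : f %ₘ q = 0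
  · exact (modByMonic_eq_zero_iff_dvd hq).mp hr
  · exfalso
    have hq0 : q ≠ 0 := hq.ne_zero
    have hlt : (f %ₘ q).degree < q.degree := degree_modByMonic_lt f hq
    have hnat : (f %ₘ q).natDegree < q.natDegree := natDegree_lt_natDegree hr hlt
    have hzero : expand ℂ 2 (f %ₘ q) = 0 := by
      apply eq_zero_of_dvd_of_degree_lt hmod
      rw [degree_eq_natDegree ((expand_ne_zero (by norm_num : 0 < 2)).mpr hr),
        degree_eq_natDegree ((expand_ne_zero (by norm_num : 0 < 2)).mpr hq0),
        natDegree_expand, natDegree_expand]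
      exact_mod_cast (by omega : (f %ₘ q).natDegree * 2 < q.natDegree * 2)
    exact hr ((expand_eq_zero (by norm_num : 0 < 2)).mp hzero)

private lemma phi_identity (x y : Polynomial ℂ) :
    (x.comp (X ^ 2) + X * y.comp (X ^ 2)) *
      (x.comp (X ^ 2) + X * y.comp (X ^ 2)).comp (-X) - 1
    = expand ℂ 2 (x ^ 2 - X * y ^ 2 - 1) := by
  have hA : (x.comp (X ^ 2)).comp (-X) = x.comp (X ^ 2) := by
    rw [comp_assoc]
    congr 1
    simp [pow_comp, neg_sq]
  have hB : (y.comp (X ^ 2)).comp (-X) = y.comp (X ^ 2) := by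
    rw [comp_assoc]
    congr 1
    simp [pow_comp, neg_sq]
  rw [add_comp, mul_comp, X_comp, hA, hB]
  rw [← expand_eq_comp_X_pow (p := 2) (f := x), ← expand_eq_comp_X_pow (p := 2) (f := y)]
  simp only [map_sub, map_mul, map_pow, map_one, expand_X]
  ring

/-- for a monic `q` of degree `n`, the map `(x, y) ↦ p(u) = x(u²) + u·y(u²)` is a
bijection from pairs of polynomials of degree `≤ n-1` with `x² - X·y² ≡ 1 (mod q)` onto the
polynomials `p` of degree `≤ 2n-1` with `p(u)·p(-u) ≡ 1 (mod q(u²))`. -/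
theorem transverse_hilbert_double_cover_rational_maps (n : ℕ) (hn : 1 ≤ n)
    (q : Polynomial ℂ) (hq : q.Monic) (hdeg : q.natDegree = n) :
    Set.BijOn
      (fun xy : Polynomial ℂ × Polynomial ℂ =>
        xy.1.comp (X ^ 2) + X * xy.2.comp (X ^ 2))
      {xy : Polynomial ℂ × Polynomial ℂ |
        xy.1.degree < (n : ℕ) ∧ xy.2.degree < (n : ℕ) ∧
        q ∣ (xy.1 ^ 2 - X * xy.2 ^ 2 - 1)}
      {p : Polynomial ℂ |
        p.degree < (2 * n : ℕ) ∧ q.comp (X ^ 2) ∣ (p * p.comp (-X) - 1)} := by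
  constructor
  · -- MapsTo
    rintro ⟨x, y⟩ ⟨hx, hy, hdvd⟩
    constructor
    · show (x.comp (X ^ 2) + X * y.comp (X ^ 2)).degree < ((2 * n : ℕ) : WithBot ℕ)
      rw [degree_lt_iff_coeff_zero]
      intro m hm
      rcases Nat.even_or_odd m with ⟨k, hk⟩ | ⟨k, hk⟩
      · have hm2 : m = 2 * k := by omega
        rw [hm2, coeff_phi_even]
        exact (degree_lt_iff_coeff_zero _ _).mp hx k (by omega)
      · rw [hk, coeff_phi_odd]
        exact (degree_lt_iff_coeff_zero _ _).mp hy k (by omega)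
    · show q.comp (X ^ 2) ∣ _
      rw [phi_identity]
      rw [show q.comp (X ^ 2) = expand ℂ 2 q from rfl]
      exact expand_dvd_of_dvd hdvd
  constructor
  · -- InjOn
    rintro ⟨x₁, y₁⟩ _ ⟨x₂, y₂⟩ _ heq
    have heq' : x₁.comp (X ^ 2) + X * y₁.comp (X ^ 2)
        = x₂.comp (X ^ 2) + X * y₂.comp (X ^ 2) := heq
    have hx : x₁ = x₂ := by
      ext k
      have := congrArg (fun p : Polynomial ℂ => p.coeff (2 * k)) heq'
      simpa only [coeff_phi_even] using this
    have hy : y₁ = y₂ := by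
      ext k
      have := congrArg (fun p : Polynomial ℂ => p.coeff (2 * k + 1)) heq'
      simpa only [coeff_phi_odd] using this
    exact Prod.ext hx hy
  · -- SurjOn
    rintro p ⟨hpdeg, hpdvd⟩
    have hpz : ∀ m, 2 * n ≤ m → p.coeff m = 0 :=
      (degree_lt_iff_coeff_zero p (2 * n)).mp hpdeg
    set x : Polynomial ℂ := ∑ k ∈ Finset.range n, C (p.coeff (2 * k)) * X ^ k with hxdef
    set y : Polynomial ℂ := ∑ k ∈ Finset.range n, C (p.coeff (2 * k + 1)) * X ^ k with hydef
    have hcx : ∀ j, x.coeff j = if j < n then p.coeff (2 * j) else 0 := by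
      intro j
      simp only [hxdef, finset_sum_coeff, coeff_C_mul, coeff_X_pow, mul_ite, mul_one, mul_zero,
        Finset.sum_ite_eq, Finset.mem_range]
    have hcy : ∀ j, y.coeff j = if j < n then p.coeff (2 * j + 1) else 0 := by
      intro j
      simp only [hydef, finset_sum_coeff, coeff_C_mul, coeff_X_pow, mul_ite, mul_one, mul_zero,
        Finset.sum_ite_eq, Finset.mem_range]
    have hcx' : ∀ j, x.coeff j = p.coeff (2 * j) := by
      intro j
      rw [hcx j]
      split_ifs with h
      · rfl
      · exact (hpz _ (by omega)).symm
    have hcy' : ∀ j, y.coeff j = p.coeff (2 * j + 1) := by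
      intro j
      rw [hcy j]
      split_ifs with h
      · rfl
      · exact (hpz _ (by omega)).symm
    have hphi : x.comp (X ^ 2) + X * y.comp (X ^ 2) = p := by
      ext m
      rcases Nat.even_or_odd m with ⟨k, hk⟩ | ⟨k, hk⟩
      · have hm2 : m = 2 * k := by omega
        rw [hm2, coeff_phi_even, hcx']
      · rw [hk, coeff_phi_odd, hcy']
    refine ⟨⟨x, y⟩, ⟨?_, ?_, ?_⟩, hphi⟩
    · rw [degree_lt_iff_coeff_zero]
      intro m hm
      rw [hcx m, if_neg (by omega)]
    · rw [degree_lt_iff_coeff_zero]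
      intro m hm
      rw [hcy m, if_neg (by omega)]
    · refine dvd_of_expand_dvd hq ?_
      have : expand ℂ 2 q ∣ expand ℂ 2 (x ^ 2 - X * y ^ 2 - 1) := by
        rw [show expand ℂ 2 q = q.comp (X ^ 2) from rfl, ← phi_identity, hphi]
        exact hpdvd
      exact this
end

section
/- Let S and Y be n×n complex matrices with S·Y + Y·S = τ·I for some τ ∈ ℂ, and suppose S is regular (its minimal polynomial equals its characteristic polynomial). (a) If τ ≠ 0 and 0 is an eigenvalue of S, then the algebraic multiplicity of 0 as a root of the characteristic polynomial of S is even. (b) If τ = 0 and u ≠ 0 satisfies S·u = 0, then u is an eigenvector of Y, i.e. Y·u = ρ·u for some ρ ∈ ℂ. -/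
open Matrix Polynomial

/-- let `S·Y + Y·S = τ·I` with `S` regular. (a) If `τ ≠ 0` and `0` is an
eigenvalue of `S`, then its algebraic multiplicity is even. (b) If `τ = 0` and `S·u = 0` with
`u ≠ 0`, then `u` is an eigenvector of `Y`. -/
theorem zero_eigenvalue_multiplicity (n : ℕ) (S Y : Matrix (Fin n) (Fin n) ℂ) (τ : ℂ)
    (hSY : S * Y + Y * S = τ • 1)
    (hreg : minpoly ℂ S = S.charpoly) :
    (τ ≠ 0 → S.charpoly.IsRoot 0 → Even (S.charpoly.rootMultiplicity 0)) ∧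
    (τ = 0 → ∀ u : Fin n → ℂ, u ≠ 0 → S.mulVec u = 0 → ∃ ρ : ℂ, Y.mulVec u = ρ • u) := by
  have hYS : Y * S = τ • 1 - S * Y := by
    rw [← hSY]; abel
  constructor
  · -- part (a)
    intro hτ _hroot
    by_contra hodd
    obtain ⟨k, hk⟩ := Nat.not_even_iff_odd.mp hodd
    have hp0 : S.charpoly ≠ 0 := S.charpoly_monic.ne_zero
    obtain ⟨q, hq, hndvd⟩ :=
      S.charpoly.exists_eq_pow_rootMultiplicity_mul_and_not_dvd hp0 0
    rw [_root_.map_zero, sub_zero] at hq hndvd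
    rw [hk] at hq
    have hq0 : q ≠ 0 := fun h => hp0 (by rw [hq, h, mul_zero])
    set B := aeval S q with hB
    set A := S ^ (2 * k) with hA
    -- S commutes with B
    have hc2 : Commute S B := by
      show S * B = B * S
      have h1 : S * B = aeval S (X * q) := by rw [_root_.map_mul, aeval_X]
      have h2 : B * S = aeval S (q * X) := by rw [_root_.map_mul, aeval_X]
      rw [h1, h2, mul_comm q X]
    -- Cayley-Hamilton
    have hCH : S ^ (2 * k + 1) * B = 0 := by
      have h := S.aeval_self_charpoly
      rw [hq, _root_.map_mul, _root_.map_pow, aeval_X] at h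
      exact h
    have hBS : B * S ^ (2 * k + 1) = 0 := by
      rw [← (hc2.pow_left (2 * k + 1)).eq, hCH]
    -- Y commutes with S^2 (hence with even powers of S)
    have hY2 : Y * (S * S) = S * S * Y := by
      calc Y * (S * S) = (Y * S) * S := by rw [mul_assoc]
        _ = (τ • 1 - S * Y) * S := by rw [hYS]
        _ = τ • S - S * (Y * S) := by
            rw [sub_mul, smul_mul_assoc, one_mul, mul_assoc]
        _ = τ • S - S * (τ • 1 - S * Y) := by rw [hYS]
        _ = S * S * Y := by
            rw [mul_sub, mul_smul_comm, mul_one, sub_sub_cancel, mul_assoc]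
    have hYA : Y * A = A * Y := by
      have hcy : Commute Y (S * S) := hY2
      have h := (hcy.pow_right k).eq
      rw [← pow_two, ← pow_mul] at h
      exact h
    have hAS : A * S = S ^ (2 * k + 1) := by rw [hA, ← pow_succ]
    -- key computation
    have h0 : B * A * (S * Y + Y * S) * B = τ • (B * A * B) := by
      rw [hSY, Matrix.mul_smul, mul_one, Matrix.smul_mul]
    have h1 : B * A * (S * Y) * B = 0 := by
      have e1 : B * A * (S * Y) * B = (B * (A * S)) * (Y * B) := by noncomm_ring
      rw [e1, hAS, hBS, zero_mul]
    have h2 : B * A * (Y * S) * B = 0 := by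
      calc B * A * (Y * S) * B = B * ((A * Y) * S) * B := by noncomm_ring
        _ = B * ((Y * A) * S) * B := by rw [hYA]
        _ = (B * Y) * ((A * S) * B) := by noncomm_ring
        _ = 0 := by rw [hAS, hCH, mul_zero]
    have key : τ • (B * A * B) = 0 := by
      have hexp : B * A * (S * Y + Y * S) * B
          = B * A * (S * Y) * B + B * A * (Y * S) * B := by noncomm_ring
      rw [← h0, hexp, h1, h2, add_zero]
    have hBAB : B * A * B = 0 := by
      rcases smul_eq_zero.mp key with h | h
      · exact absurd h hτ
      · exact h
    have hz : aeval S (q * X ^ (2 * k) * q) = 0 := by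
      rw [_root_.map_mul, _root_.map_mul, _root_.map_pow, aeval_X, ← hB, ← hA]
      exact hBAB
    have hdvd : S.charpoly ∣ q * X ^ (2 * k) * q := by
      rw [← hreg]; exact minpoly.dvd ℂ S hz
    rw [hq] at hdvd
    obtain ⟨c, hc⟩ := hdvd
    have hX0 : (X : ℂ[X]) ^ (2 * k) ≠ 0 := pow_ne_zero _ X_ne_zero
    have h5 : q * q = q * (X * c) := by
      apply mul_left_cancel₀ hX0
      linear_combination hc
    have h6 : q = X * c := mul_left_cancel₀ hq0 h5
    exact hndvd ⟨c, h6⟩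
  · -- part (b)
    intro hτ u hu hSu
    by_contra hrho
    push_neg at hrho
    set w := Y.mulVec u with hw
    have hSY0 : S * Y = -(Y * S) := by
      rw [hτ, zero_smul] at hSY
      exact eq_neg_of_add_eq_zero_left hSY
    have hSw : S.mulVec w = 0 := by
      rw [hw, Matrix.mulVec_mulVec, hSY0, Matrix.neg_mulVec, ← Matrix.mulVec_mulVec,
        hSu, Matrix.mulVec_zero, neg_zero]
    have hli : LinearIndependent ℂ ![u, w] := by
      rw [LinearIndependent.pair_iff' hu]
      intro a ha
      exact hrho a ha.symm
    set W : Submodule ℂ (Fin n → ℂ) := Submodule.span ℂ (Set.range ![u, w]) with hW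
    set f : (Fin n → ℂ) →ₗ[ℂ] (Fin n → ℂ) := Matrix.toLinAlgEquiv' S with hf
    have hWle : W ≤ LinearMap.ker f := by
      rw [hW, Submodule.span_le]
      rintro x ⟨i, rfl⟩
      fin_cases i <;>
        simp [hf, LinearMap.mem_ker, Matrix.toLinAlgEquiv'_apply, hSu, hSw]
    have hle : W ≤ W.comap f := by
      intro x hx
      rw [Submodule.mem_comap, LinearMap.mem_ker.mp (hWle hx)]
      exact W.zero_mem
    set g := W.mapQ W f hle with hg
    have hπ : ∀ x, W.mkQ (f x) = g (W.mkQ x) := by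
      intro x
      rw [hg, Submodule.mkQ_apply, Submodule.mkQ_apply, Submodule.mapQ_apply]
    have hpow : ∀ (k : ℕ) (x : Fin n → ℂ), W.mkQ ((f ^ k) x) = (g ^ k) (W.mkQ x) := by
      intro k
      induction k with
      | zero => intro x; simp
      | succ k ih =>
        intro x
        rw [pow_succ, pow_succ, Module.End.mul_apply, Module.End.mul_apply, ← hπ]
        exact ih (f x)
    have haev : ∀ (h : ℂ[X]) (x : Fin n → ℂ),
        W.mkQ ((aeval f h) x) = (aeval g h) (W.mkQ x) := by
      intro h
      induction h using Polynomial.induction_on' with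
      | add p q hp hq =>
        intro x
        simp only [_root_.map_add, LinearMap.add_apply]
        rw [hp, hq]
      | monomial k a =>
        intro x
        simp only [aeval_monomial, Module.End.mul_apply, Module.algebraMap_end_apply,
          _root_.map_smul]
        rw [hpow]
    set p := LinearMap.charpoly g with hp
    have hzf : aeval f (X * p) = 0 := by
      apply LinearMap.ext
      intro x
      have h1 : W.mkQ ((aeval f p) x) = 0 := by
        rw [haev, hp, LinearMap.aeval_self_charpoly, LinearMap.zero_apply]
      have h2 : (aeval f p) x ∈ W := by
        rwa [Submodule.mkQ_apply, Submodule.Quotient.mk_eq_zero] at h1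
      have h3 : f ((aeval f p) x) = 0 := LinearMap.mem_ker.mp (hWle h2)
      rw [_root_.map_mul, aeval_X, Module.End.mul_apply, h3, LinearMap.zero_apply]
    have hz : aeval S (X * p) = 0 := by
      apply (Matrix.toLinAlgEquiv' (R := ℂ) (n := Fin n)).injective
      rw [_root_.map_zero, ← aeval_algHom_apply Matrix.toLinAlgEquiv' S (X * p), ← hf]
      exact hzf
    have hdvd : S.charpoly ∣ X * p := by rw [← hreg]; exact minpoly.dvd ℂ S hz
    have hmono : p.Monic := LinearMap.charpoly_monic g
    have hXp : (X * p : ℂ[X]) ≠ 0 := mul_ne_zero X_ne_zero hmono.ne_zero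
    have hdeg : S.charpoly.natDegree ≤ (X * p).natDegree := natDegree_le_of_dvd hdvd hXp
    rw [Matrix.charpoly_natDegree_eq_dim, Fintype.card_fin,
      natDegree_mul X_ne_zero hmono.ne_zero, natDegree_X] at hdeg
    have hpdeg : p.natDegree = Module.finrank ℂ ((Fin n → ℂ) ⧸ W) :=
      LinearMap.charpoly_natDegree g
    have hrank : Module.finrank ℂ ((Fin n → ℂ) ⧸ W) + Module.finrank ℂ W
        = Module.finrank ℂ (Fin n → ℂ) := Submodule.finrank_quotient_add_finrank W
    have hWrk : Module.finrank ℂ W = 2 := by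
      rw [hW, finrank_span_eq_card hli, Fintype.card_fin]
    have hN : Module.finrank ℂ (Fin n → ℂ) = n := Module.finrank_fin_fun ℂ
    omega
end

section
/- For every integer m ≥ 1 and all μ₁, μ₂ ∈ ℂ with μ₁ ≠ 0 and μ₂ ≠ 0, the set D_{2,m}(μ₁,μ₂) is nonempty: there exist 2m×2m complex matrices S and Y with S in companion form, tr S = 0, tr Y = 0, S·Y + Y·S = (μ₁²−μ₂²)·I and (Y − S/2)² = μ₂²·I. -/
open Polynomial Matrix

open Polynomial

/-- Hensel-style square root lifting in `ℂ[X]` along powers of `X - C a`. -/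
lemma hensel_sqrt (a : ℂ) (ha : a ≠ 0) (T : ℂ[X]) (hT : T.eval a ≠ 0) :
    ∀ k : ℕ, 1 ≤ k →
      ∃ r : ℂ[X], ((X - C a) ^ k ∣ X * r ^ 2 - T) ∧ a * (r.eval a) ^ 2 = T.eval a := by
  intro k hk
  induction k, hk using Nat.le_induction with
  | base =>
    obtain ⟨c, hc⟩ := IsAlgClosed.exists_pow_nat_eq (k := ℂ) (T.eval a / a) zero_lt_two
    refine ⟨C c, ?_, ?_⟩
    · rw [pow_one, dvd_iff_isRoot]
      simp only [IsRoot, eval_sub, eval_mul, eval_pow, eval_X, eval_C, hc]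
      field_simp
      ring
    · simp only [eval_C, hc]; field_simp
  | succ k hk ih =>
    obtain ⟨r, hdvd, hinv⟩ := ih
    obtain ⟨H, hH⟩ := hdvd
    have hra : r.eval a ≠ 0 := by
      intro h; rw [h] at hinv; simp at hinv; exact hT hinv.symm
    set δ : ℂ := -H.eval a / (2 * a * r.eval a) with hδ
    refine ⟨r + C δ * (X - C a) ^ k, ?_, ?_⟩
    · have hid : X * (r + C δ * (X - C a) ^ k) ^ 2 - T =
          (X - C a) ^ k * (H + 2 * X * r * C δ + X * C δ ^ 2 * (X - C a) ^ k) := by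
        linear_combination hH
      rw [hid, pow_succ]
      refine mul_dvd_mul_left _ ?_
      rw [dvd_iff_isRoot]
      simp only [IsRoot, eval_add, eval_mul, eval_pow, eval_X, eval_C, eval_sub, eval_ofNat]
      rw [sub_self, zero_pow (by omega)]
      rw [hδ]
      field_simp
      ring
    · have : (r + C δ * (X - C a) ^ k).eval a = r.eval a := by
        simp [eval_pow, zero_pow (by omega : k ≠ 0)]
      rw [this]; exact hinv

open Polynomial

lemma odd_coeff_zero (a : ℂ) (m : ℕ) {k : ℕ} (hk : Odd k) :
    ((X ^ 2 - C a) ^ m).coeff k = 0 := by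
  have h : (X ^ 2 - C a) ^ m
      = ∑ j ∈ Finset.range (m + 1), X ^ (2 * j) * C ((-a) ^ (m - j) * (m.choose j)) := by
    rw [sub_eq_add_neg, add_pow]
    refine Finset.sum_congr rfl fun j hj => ?_
    rw [← C_neg, ← C_pow, ← pow_mul, ← map_natCast (C : ℂ →+* ℂ[X]) (m.choose j), mul_assoc, ← C_mul]
  rw [h, finset_sum_coeff]
  refine Finset.sum_eq_zero fun j hj => ?_
  rw [coeff_X_pow_mul', coeff_C]
  obtain ⟨t, ht⟩ := hk
  split_ifs with h1 h2
  · omega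
  · rfl
  · rfl

open Polynomial Matrix

/-- The companion matrix of a monic polynomial is annihilated by it. -/
lemma companion_aeval_self (n : ℕ) (hn : 0 < n) (f : ℂ[X]) (hf : f.Monic)
    (hdeg : f.natDegree = n) :
    Polynomial.aeval (Matrix.of fun i j : Fin n =>
      if (i : ℕ) = (j : ℕ) + 1 then (1 : ℂ)
      else if (j : ℕ) = n - 1 then -f.coeff (i : ℕ) else 0) f = 0 := by
  set S : Matrix (Fin n) (Fin n) ℂ := Matrix.of fun i j : Fin n =>
      if (i : ℕ) = (j : ℕ) + 1 then (1 : ℂ)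
      else if (j : ℕ) = n - 1 then -f.coeff (i : ℕ) else 0 with hS
  -- column action
  have hcol : ∀ (j : Fin n) (hj : (j : ℕ) + 1 < n),
      S *ᵥ Pi.single j 1 = Pi.single (⟨(j : ℕ) + 1, hj⟩ : Fin n) (1 : ℂ) := by
    intro j hj
    rw [mulVec_single]
    funext i
    rw [Pi.single_apply]
    show (if (i : ℕ) = (j : ℕ) + 1 then (1:ℂ) else if (j : ℕ) = n - 1 then -f.coeff i else 0) * 1
      = _
    rw [mul_one]
    have hjne : (j : ℕ) ≠ n - 1 := by omega
    simp only [hjne, if_false, Fin.ext_iff]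
  have hlast : S *ᵥ Pi.single (⟨n - 1, by omega⟩ : Fin n) 1 = fun i : Fin n => -f.coeff (i : ℕ) := by
    rw [mulVec_single]
    funext i
    show (if (i : ℕ) = (n - 1) + 1 then (1:ℂ) else if ((n:ℕ) - 1 : ℕ) = n - 1 then -f.coeff i else 0) * 1 = _
    have : (i : ℕ) ≠ (n - 1) + 1 := by have := i.isLt; omega
    simp [this]
  have hpow : ∀ (k : ℕ) (hk : k < n),
      (S ^ k) *ᵥ Pi.single (⟨0, hn⟩ : Fin n) 1 = Pi.single (⟨k, hk⟩ : Fin n) 1 := by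
    intro k
    induction k with
    | zero => intro hk; rw [pow_zero, one_mulVec]
    | succ k ih =>
      intro hk
      rw [pow_succ', ← mulVec_mulVec, ih (by omega), hcol ⟨k, by omega⟩ hk]
  have hSn : (S ^ n) *ᵥ Pi.single (⟨0, hn⟩ : Fin n) 1 = fun i : Fin n => -f.coeff (i : ℕ) := by
    have h1 : S * S ^ (n - 1) = S ^ n := by
      rw [← pow_succ', Nat.sub_add_cancel hn]
    rw [← h1, ← mulVec_mulVec, hpow (n-1) (by omega), hlast]
  have hp0 : (aeval S f) *ᵥ Pi.single (⟨0, hn⟩ : Fin n) 1 = 0 := by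
    rw [aeval_eq_sum_range, hdeg]
    show (Matrix.mulVec.addMonoidHomLeft (Pi.single (⟨0, hn⟩ : Fin n) 1))
      (∑ i ∈ Finset.range (n + 1), f.coeff i • S ^ i) = 0
    rw [map_sum]
    simp only [Matrix.mulVec.addMonoidHomLeft, AddMonoidHom.coe_mk, ZeroHom.coe_mk,
      smul_mulVec]
    rw [Finset.sum_range_succ, hSn]
    have hcn : f.coeff n = 1 := by rw [← hdeg]; exact hf.coeff_natDegree
    rw [hcn, one_smul]
    rw [Finset.sum_range fun k => f.coeff k • (S ^ k) *ᵥ Pi.single (⟨0, hn⟩ : Fin n) 1]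
    have h2 : ∀ k : Fin n, f.coeff (k : ℕ) • ((S ^ (k : ℕ)) *ᵥ Pi.single (⟨0, hn⟩ : Fin n) (1 : ℂ))
        = f.coeff (k : ℕ) • (Pi.single k (1 : ℂ) : Fin n → ℂ) := by
      intro k
      rw [hpow (k : ℕ) k.isLt]
    rw [Finset.sum_congr rfl fun k _ => h2 k]
    funext i
    simp only [Finset.sum_apply, Pi.add_apply, Pi.smul_apply, Pi.single_apply, smul_eq_mul,
      mul_ite, mul_one, mul_zero, Pi.zero_apply]
    rw [Finset.sum_ite_eq Finset.univ i (fun k => f.coeff (k : ℕ))]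
    simp
  ext i j
  have hsingle : (Pi.single j (1:ℂ) : Fin n → ℂ) = (S ^ (j:ℕ)) *ᵥ Pi.single (⟨0, hn⟩ : Fin n) 1 := by
    rw [hpow (j:ℕ) j.isLt]
  have hcomm : (aeval S f) * S ^ (j:ℕ) = S ^ (j:ℕ) * aeval S f := by
    have h1 : aeval S f * aeval S ((X:ℂ[X]) ^ (j:ℕ)) = aeval S ((X:ℂ[X]) ^ (j:ℕ)) * aeval S f := by
      rw [← _root_.map_mul, ← _root_.map_mul, mul_comm]
    simpa [map_pow] using h1
  have hz : (aeval S f) *ᵥ (Pi.single j (1:ℂ)) = 0 := by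
    rw [hsingle, mulVec_mulVec, hcomm, ← mulVec_mulVec, hp0, mulVec_zero]
  have h3 := congrFun hz i
  rw [mulVec_single] at h3
  simpa using h3


open Matrix

/-- for every `m ≥ 1` and `μ₁, μ₂ ≠ 0` the set `D_{2,m}(μ₁,μ₂)` is nonempty. -/
theorem D2m_nonempty (m : ℕ) (hm : 1 ≤ m) (μ₁ μ₂ : ℂ) (h₁ : μ₁ ≠ 0) (h₂ : μ₂ ≠ 0) :
    ∃ S Y : Matrix (Fin (2 * m)) (Fin (2 * m)) ℂ,
      IsCompanionForm S ∧ S.trace = 0 ∧ Y.trace = 0 ∧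
      S * Y + Y * S = (μ₁^2 - μ₂^2) • 1 ∧
      (Y - (1/2 : ℂ) • S) ^ 2 = μ₂^2 • 1 := by
  set lam : ℂ := μ₁^2 - μ₂^2 with hlam
  set T : ℂ[X] := C (μ₂^2) * X - (C (lam/2) - C (1/2) * X)^2 with hT
  -- T is a nonzero polynomial
  have hT2 : T.coeff 2 = -(1/4 : ℂ) := by
    have hexp : T = C (μ₂^2) * X - C (lam/2 * (lam/2)) + C (lam/2 * (1/2)) * X
        + C (lam/2 * (1/2)) * X - C ((1:ℂ)/2 * (1/2)) * X^2 := by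
      rw [hT]; simp only [C_mul]; ring
    rw [hexp]
    simp only [coeff_sub, coeff_add, coeff_C_mul, coeff_X_pow, coeff_C, coeff_X]
    norm_num
  have hTne : T ≠ 0 := by
    intro h; rw [h] at hT2; simp at hT2
  -- choose a good point a
  have hfin : (({0} ∪ {x : ℂ | T.IsRoot x}) : Set ℂ).Finite :=
    (Set.finite_singleton 0).union (Polynomial.finite_setOf_isRoot hTne)
  obtain ⟨a, ha⟩ := hfin.exists_notMem
  have ha0 : a ≠ 0 := by intro h; exact ha (Or.inl (by simp [h]))
  have haT : T.eval a ≠ 0 := by intro h; exact ha (Or.inr h)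
  -- polynomials
  set P : ℂ[X] := (X - C a)^m with hP
  set p : ℂ[X] := (X^2 - C a)^m with hp
  have hPp : P.comp (X^2) = p := by rw [hP, hp, pow_comp, sub_comp, X_comp, C_comp]
  set c0 : ℂ := P.coeff 0 with hc0def
  have hc0 : c0 ≠ 0 := by
    rw [hc0def, coeff_zero_eq_eval_zero, hP]
    simp only [eval_pow, eval_sub, eval_X, eval_C, zero_sub]
    exact pow_ne_zero _ (neg_ne_zero.mpr ha0)
  set u : ℂ[X] := -(C c0⁻¹ * P.divX) with hu
  have hCc : (C c0⁻¹ : ℂ[X]) * C (P.coeff 0) = 1 := by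
    rw [← C_mul, inv_mul_cancel₀ hc0, C_1]
  have hXu : X * u = 1 - C c0⁻¹ * P := by
    have h := Polynomial.X_mul_divX_add P
    rw [hu]; linear_combination (-(C c0⁻¹ : ℂ[X])) * h + hCc
  set uq : ℂ[X] := C (lam/2) * u with huq
  set q : ℂ[X] := X * (uq.comp (X^2)) with hq
  set g : ℂ[X] := X * (u.comp (X^2)) with hg
  set wv : ℂ[X] := uq - C (1/2) with hwv
  set wp : ℂ[X] := X * (wv.comp (X^2)) with hwpdef
  obtain ⟨rt, hrtdvd, -⟩ := hensel_sqrt a ha0 T haT m hm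
  set r : ℂ[X] := rt.comp (X^2) with hr
  -- key polynomial identities
  have hXg : X * g = 1 - C c0⁻¹ * p := by
    have h1 : (X * u).comp (X^2) = 1 - C c0⁻¹ * p := by
      rw [hXu, sub_comp, one_comp, mul_comp, C_comp, hPp]
    have h2 : (X * u).comp (X^2) = X^2 * u.comp (X^2) := by rw [mul_comp, X_comp]
    rw [hg]; rw [h2] at h1; linear_combination h1
  have hXq : X * q = C (lam/2) * (1 - C c0⁻¹ * p) := by
    have h1 : (X * uq).comp (X^2) = C (lam/2) * (1 - C c0⁻¹ * p) := by
      rw [huq]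
      have : (X : ℂ[X]) * (C (lam/2) * u) = C (lam/2) * (X * u) := by ring
      rw [this, mul_comp, C_comp, hXu, sub_comp, one_comp, mul_comp, C_comp, hPp]
    have h2 : (X * uq).comp (X^2) = X^2 * uq.comp (X^2) := by rw [mul_comp, X_comp]
    rw [hq]; rw [h2] at h1; linear_combination h1
  have hwp : wp = q - C (1/2) * X := by
    rw [hwpdef, hwv, sub_comp, C_comp, hq]; ring
  -- matrices
  have hn0 : 0 < 2 * m := by omega
  set S : Matrix (Fin (2*m)) (Fin (2*m)) ℂ := Matrix.of fun i j : Fin (2*m) =>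
      if (i : ℕ) = (j : ℕ) + 1 then (1 : ℂ)
      else if (j : ℕ) = 2*m - 1 then -p.coeff (i : ℕ) else 0 with hSdef
  set sg : Matrix (Fin (2*m)) (Fin (2*m)) ℂ :=
      Matrix.diagonal (fun i : Fin (2*m) => (-1 : ℂ)^(i : ℕ)) with hsg
  have hpmonic : p.Monic := by
    rw [hp]; exact (monic_X_pow_sub_C a two_ne_zero).pow m
  have hpdeg : p.natDegree = 2*m := by
    rw [hp, natDegree_pow, natDegree_X_pow_sub_C]; ring
  have hCH : aeval S p = 0 := by
    have := companion_aeval_self (2*m) hn0 p hpmonic hpdeg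
    rw [hSdef]; exact this
  have hoddc : ∀ k : ℕ, Odd k → p.coeff k = 0 := fun k hk => odd_coeff_zero a m hk
  have hodd2m : Odd (2*m - 1) := ⟨m - 1, by omega⟩
  -- sigma relations
  have hσσ : sg * sg = 1 := by
    rw [hsg, diagonal_mul_diagonal]
    have : (fun i : Fin (2*m) => (-1:ℂ)^(i:ℕ) * (-1:ℂ)^(i:ℕ)) = fun _ => 1 := by
      funext i; rw [← pow_add]; exact Even.neg_one_pow ⟨(i:ℕ), rfl⟩
    rw [this, diagonal_one]
  have hσS : sg * S = -(S * sg) := by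
    ext i j
    rw [hsg, Matrix.diagonal_mul, Matrix.neg_apply, Matrix.mul_diagonal, hSdef]
    simp only [Matrix.of_apply]
    split_ifs with hij hjl
    · rw [hij, pow_succ]; ring
    · rcases Nat.even_or_odd (i : ℕ) with he | ho
      · rw [Even.neg_one_pow he, hjl, Odd.neg_one_pow hodd2m]; ring
      · rw [hoddc _ ho]; ring
    · ring
  have hσS2 : sg * (S * S) = (S * S) * sg := by
    rw [← mul_assoc, hσS, neg_mul, mul_assoc, hσS, mul_neg, neg_neg, ← mul_assoc]
  -- commutation of sigma with even/odd polynomials in S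
  have heven : ∀ w : ℂ[X], sg * (aeval S (w.comp (X^2))) = (aeval S (w.comp (X^2))) * sg := by
    intro w
    rw [aeval_comp]
    have hX2 : aeval S ((X : ℂ[X])^2) = S * S := by rw [map_pow, aeval_X, pow_two]
    rw [hX2]
    induction w using Polynomial.induction_on' with
    | add f f' hf hf' => rw [map_add, mul_add, add_mul, hf, hf']
    | monomial k c =>
      rw [aeval_monomial]
      have hC : Commute sg (S*S) := hσS2
      have h1 : sg * (S*S)^k = (S*S)^k * sg := Commute.pow_right hC k
      rw [← mul_assoc, ← Algebra.commutes c sg, mul_assoc, h1, ← mul_assoc]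
  have hodd' : ∀ w : ℂ[X], sg * (aeval S (X * w.comp (X^2)))
      = -((aeval S (X * w.comp (X^2))) * sg) := by
    intro w
    rw [_root_.map_mul, aeval_X, ← mul_assoc, hσS, neg_mul, mul_assoc, heven w, ← mul_assoc]
  -- commutativity helper
  have hcomm : ∀ f f' : ℂ[X], aeval S f * aeval S f' = aeval S f' * aeval S f :=
    fun f f' => by rw [← _root_.map_mul, ← _root_.map_mul, mul_comm f f']
  have hmulS : ∀ f : ℂ[X], aeval S (X * f) = S * aeval S f :=
    fun f => by rw [_root_.map_mul, aeval_X]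
  -- named matrices
  obtain ⟨Q, hQ⟩ : ∃ Q, Q = aeval S q := ⟨_, rfl⟩
  obtain ⟨R, hR⟩ : ∃ R, R = aeval S r := ⟨_, rfl⟩
  obtain ⟨G, hG⟩ : ∃ G, G = aeval S g := ⟨_, rfl⟩
  obtain ⟨W, hW⟩ : ∃ W, W = aeval S wp := ⟨_, rfl⟩
  obtain ⟨Y, hY⟩ : ∃ Y, Y = Q + R * sg := ⟨_, rfl⟩
  have haevXg : aeval S (X * g) = 1 := by
    rw [hXg, map_sub, _root_.map_one, _root_.map_mul, hCH, mul_zero, sub_zero]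
  have hSG : S * G = 1 := by rw [hG, ← hmulS, haevXg]
  have hGS : G * S = 1 := by
    have h := hcomm g X
    rw [aeval_X] at h
    rw [hG, h, ← hmulS, haevXg]
  -- sigma relations with the named matrices
  have hQs : sg * Q = -(Q * sg) := by rw [hQ, hq]; exact hodd' uq
  have hGs : sg * G = -(G * sg) := by rw [hG, hg]; exact hodd' u
  have hWs : sg * W = -(W * sg) := by rw [hW, hwpdef]; exact hodd' wv
  have hRs : sg * R = R * sg := by rw [hR, hr]; exact heven rt
  have hRG : R * G = G * R := by rw [hR, hG]; exact hcomm r g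
  have hQS : Q * S = S * Q := by
    have h := hcomm q X
    rw [aeval_X] at h
    rw [hQ, h, ← hmulS]
  have hRS : R * S = S * R := by
    have h := hcomm r X
    rw [aeval_X] at h
    rw [hR, h]
  have hWR : W * R = R * W := by rw [hW, hR]; exact hcomm wp r
  -- trace of Q vanishes
  have htQ : Q.trace = 0 := by
    have h2 : (sg * Q * sg).trace = Q.trace := by
      rw [Matrix.trace_mul_cycle, hσσ, one_mul]
    have h3 : sg * Q * sg = -Q := by rw [hQs, neg_mul, mul_assoc, hσσ, mul_one]
    rw [h3, Matrix.trace_neg] at h2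
    have h4 : Q.trace + Q.trace = 0 := by linear_combination -h2
    exact add_self_eq_zero.mp h4
  -- trace of R * sg vanishes
  have htR : (R * sg).trace = 0 := by
    have h5 : S * (R * sg * G) = -(R * sg) := by
      rw [mul_assoc R sg G, hGs, mul_neg, mul_neg, ← mul_assoc R G sg, hRG,
        mul_assoc G R sg, ← mul_assoc S G (R * sg), hSG, one_mul]
    have h7 : (S * (R * sg) * G).trace = (R * sg).trace := by
      rw [Matrix.trace_mul_cycle, ← mul_assoc, hGS, one_mul]
    have h8 : S * (R * sg) * G = -(R * sg) := by rw [mul_assoc]; exact h5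
    rw [h8, Matrix.trace_neg] at h7
    have h9 : (R * sg).trace + (R * sg).trace = 0 := by linear_combination -h7
    exact add_self_eq_zero.mp h9
  -- anticommutator with S
  have hRsS : (R * sg) * S = -(S * (R * sg)) := by
    rw [mul_assoc R sg S, hσS, mul_neg, ← mul_assoc R S sg, hRS, mul_assoc S R sg]
  have hXqEv : aeval S (X * q) = (lam/2) • (1 : Matrix (Fin (2*m)) (Fin (2*m)) ℂ) := by
    rw [hXq, _root_.map_mul, map_sub, _root_.map_one, _root_.map_mul, hCH, mul_zero, sub_zero,
      mul_one, aeval_C, Algebra.algebraMap_eq_smul_one]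
  have hSQform : S * Q = (lam/2) • (1 : Matrix (Fin (2*m)) (Fin (2*m)) ℂ) := by
    rw [hQ, ← hmulS, hXqEv]
  -- the matrix W
  have hWQ : W = Q - (1/2 : ℂ) • S := by
    have h1 : aeval S (C ((1:ℂ)/2) * X) = (1/2 : ℂ) • S := by
      rw [_root_.map_mul, aeval_C, aeval_X, ← Algebra.smul_def]
    rw [hW, hwp, map_sub, h1, ← hQ]
  -- main square computation pieces
  have hcross : W * (R * sg) + (R * sg) * W = 0 := by
    have h1 : (R * sg) * W = -((W * R) * sg) := by
      rw [mul_assoc R sg W, hWs, mul_neg, ← mul_assoc R W sg, hWR]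
    rw [h1, ← mul_assoc W R sg, add_neg_cancel]
  have hsq : (R * sg) * (R * sg) = R * R := by
    rw [mul_assoc R sg (R * sg), ← mul_assoc sg R sg, hRs, mul_assoc R sg sg, hσσ, mul_one]
  -- divisibility and vanishing of E
  have hrdvd : p ∣ X^2 * r^2 - T.comp (X^2) := by
    obtain ⟨k, hk⟩ := hrtdvd
    refine ⟨k.comp (X^2), ?_⟩
    have h1 : (X * rt^2 - T).comp (X^2) = X^2 * r^2 - T.comp (X^2) := by
      rw [sub_comp, mul_comp, pow_comp, X_comp, hr]
    rw [← h1, hk, mul_comp, ← hP, hPp]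
  have hTc : T.comp (X^2) = C (μ₂^2) * X^2 - (C (lam/2) - C (1/2) * X^2)^2 := by
    rw [hT, sub_comp, mul_comp, pow_comp, sub_comp, mul_comp, C_comp, C_comp, C_comp, X_comp]
  have hAB : X * wp - (C (lam/2) - C (1/2) * X^2) = p * -(C (lam/2) * C c0⁻¹) := by
    rw [hwp]; linear_combination hXq
  have hdvd2 : p ∣ X^2 * (wp^2 + r^2 - C (μ₂^2)) := by
    have hid : X^2 * (wp^2 + r^2 - C (μ₂^2)) =
        (X * wp - (C (lam/2) - C (1/2) * X^2)) * (X * wp + (C (lam/2) - C (1/2) * X^2))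
          + (X^2 * r^2 - T.comp (X^2)) := by
      rw [hTc]; ring
    rw [hid]
    exact dvd_add (Dvd.dvd.mul_right ⟨-(C (lam/2) * C c0⁻¹), hAB⟩ _) hrdvd
  have hE0 : aeval S (wp^2 + r^2 - C (μ₂^2)) = 0 := by
    obtain ⟨k2, hk2⟩ := hdvd2
    have h0 : aeval S (X^2 * (wp^2 + r^2 - C (μ₂^2))) = 0 := by
      rw [hk2, _root_.map_mul, hCH, zero_mul]
    have h1 : aeval S ((X*g)^2 * (wp^2 + r^2 - C (μ₂^2)))
        = aeval S (wp^2 + r^2 - C (μ₂^2)) := by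
      rw [_root_.map_mul, map_pow, haevXg, one_pow, one_mul]
    have h2 : ((X*g)^2 * (wp^2 + r^2 - C (μ₂^2)) : ℂ[X])
        = g^2 * (X^2 * (wp^2 + r^2 - C (μ₂^2))) := by ring
    rw [← h1, h2, _root_.map_mul, h0, mul_zero]
  -- conclusion
  refine ⟨S, Y, ?_, ?_, ?_, ?_, ?_⟩
  · -- companion form
    intro i j hj
    have hne : ¬ ((j:ℕ) = 2*m - 1) := by omega
    simp only [hSdef, Matrix.of_apply, hne, if_false]
  · -- trace S = 0
    rw [Matrix.trace]
    apply Finset.sum_eq_zero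
    intro i _
    show S i i = 0
    simp only [hSdef, Matrix.of_apply]
    have h1 : ¬ ((i:ℕ) = (i:ℕ) + 1) := by omega
    rw [if_neg h1]
    split_ifs with h2
    · rw [h2, hoddc _ hodd2m, neg_zero]
    · rfl
  · -- trace Y = 0
    rw [hY, Matrix.trace_add, htQ, htR, add_zero]
  · -- anticommutator
    have e1 : S * Y + Y * S = (S * Q + Q * S) + (S * (R * sg) + (R * sg) * S) := by
      rw [hY]; noncomm_ring
    rw [e1, hRsS, add_neg_cancel, add_zero, hQS, hSQform, ← add_smul, add_halves]
  · -- the square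
    have hMY : Y - (1/2 : ℂ) • S = W + R * sg := by rw [hY, hWQ]; abel
    have hexp2 : (W + R * sg)^2
        = W * W + (W * (R * sg) + (R * sg) * W) + (R * sg) * (R * sg) := by
      rw [pow_two]; noncomm_ring
    rw [hMY, hexp2, hcross, add_zero, hsq]
    have h3 : W * W + R * R = aeval S (wp^2 + r^2) := by
      rw [hW, hR, map_add, map_pow, map_pow, pow_two, pow_two]
    rw [h3]
    have h4 : (wp^2 + r^2 : ℂ[X]) = (wp^2 + r^2 - C (μ₂^2)) + C (μ₂^2) := by ring
    rw [h4, map_add, hE0, zero_add, aeval_C, Algebra.algebraMap_eq_smul_one]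
end
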